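/- arXiv:2403.14109 — 7 statements merged into one kernel-verified Lean document; each statement's English description precedes it below -/
import Mathlib

section
/- Let (X_i)_{i≥1} be i.i.d. real random variables with partial sums S_0 = 0, S_n = X_1 + ... + X_n, and suppose there exists υ₀ > 0 with E[exp(υ₀ X_1)] = 1. Then for every b ≥ 0, P( ∃ n ≥ 1 such that S_n ≥ b ) ≤ exp(−υ₀ b). -/
open MeasureTheory ProbabilityTheory
open scoped ENNReal NNReal

/-- Lundberg-type bound: if `E[exp(υ₀ X₁)] = 1` for some `υ₀ > 0`, then the
probability that the random walk `S n = X 1 + ⋯ + X n` ever reaches level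
`b ≥ 0` is at most `exp(−υ₀ b)`. -/
theorem lundberg_bound
    {Ω : Type*} [MeasurableSpace Ω] (μ : Measure Ω) [IsProbabilityMeasure μ]
    (X : ℕ → Ω → ℝ)
    (hmeas : ∀ i, Measurable (X i))
    (hindep : iIndepFun X μ)
    (hident : ∀ i, μ.map (X i) = μ.map (X 0))
    (υ₀ : ℝ) (hυ₀ : 0 < υ₀)
    (hmgf : ∫ ω, Real.exp (υ₀ * X 0 ω) ∂μ = 1)
    (S : ℕ → Ω → ℝ)
    (hS : ∀ n ω, S n ω = ∑ i ∈ Finset.range n, X i ω)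
    (b : ℝ) (hb : 0 ≤ b) :
    μ {ω | ∃ n, 1 ≤ n ∧ b ≤ S n ω} ≤ ENNReal.ofReal (Real.exp (-υ₀ * b)) := by
  classical
  -- the continuous function x ↦ exp (υ₀ x)
  have hφc : Continuous fun x : ℝ => Real.exp (υ₀ * x) :=
    Real.continuous_exp.comp (continuous_const.mul continuous_id)
  -- integrability of exp (υ₀ X 0)
  have hint0 : Integrable (fun ω => Real.exp (υ₀ * X 0 ω)) μ := by
    by_contra h
    rw [integral_undef h] at hmgf
    norm_num at hmgf
  have hinti : ∀ i, Integrable (fun ω => Real.exp (υ₀ * X i ω)) μ := by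
    intro i
    have h1 : Integrable (fun x : ℝ => Real.exp (υ₀ * x)) (μ.map (X 0)) :=
      (integrable_map_measure hφc.aestronglyMeasurable (hmeas 0).aemeasurable).2 hint0
    rw [← hident i] at h1
    exact (integrable_map_measure hφc.aestronglyMeasurable (hmeas i).aemeasurable).1 h1
  have himean : ∀ i, ∫ ω, Real.exp (υ₀ * X i ω) ∂μ = 1 := by
    intro i
    calc ∫ ω, Real.exp (υ₀ * X i ω) ∂μ
        = ∫ x, Real.exp (υ₀ * x) ∂(μ.map (X i)) :=
          (integral_map (hmeas i).aemeasurable hφc.aestronglyMeasurable).symm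
      _ = ∫ x, Real.exp (υ₀ * x) ∂(μ.map (X 0)) := by rw [hident i]
      _ = ∫ ω, Real.exp (υ₀ * X 0 ω) ∂μ :=
          integral_map (hmeas 0).aemeasurable hφc.aestronglyMeasurable
      _ = 1 := hmgf
  -- the filtration generated by X 0, …, X (n-1)
  set G : ℕ → MeasurableSpace Ω :=
    fun n => ⨆ i ∈ Set.Iio n, MeasurableSpace.comap (X i) inferInstance with hG
  have hGle : ∀ n, G n ≤ ‹MeasurableSpace Ω› := fun n =>
    iSup₂_le fun i _ => (hmeas i).comap_le
  have hGmono : Monotone G := fun n m h =>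
    biSup_mono fun i hi => lt_of_lt_of_le hi h
  set 𝒢 : Filtration ℕ ‹MeasurableSpace Ω› := ⟨G, hGmono, hGle⟩ with h𝒢
  -- the exponential process
  set f : ℕ → Ω → ℝ := fun n ω => Real.exp (υ₀ * ∑ i ∈ Finset.range n, X i ω) with hf
  have hXiGn : ∀ n i, i < n → Measurable[G n] (X i) := fun n i hi =>
    measurable_iff_comap_le.2
      (le_biSup (fun j => MeasurableSpace.comap (X j) inferInstance) (Set.mem_Iio.2 hi))
  have hadp : StronglyAdapted 𝒢 f := by
    intro n
    have hsum : Measurable[G n] fun ω => ∑ i ∈ Finset.range n, X i ω :=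
      Finset.measurable_sum _ fun i hi => hXiGn n i (Finset.mem_range.1 hi)
    exact ((hsum.const_mul υ₀).exp).stronglyMeasurable
  have hintf : ∀ n, Integrable (f n) μ := by
    intro n
    have := hindep.integrable_exp_mul_sum (t := υ₀) hmeas
      (s := Finset.range n) (fun i _ => hinti i)
    simpa [hf, Finset.sum_apply] using this
  have hmeanf : ∀ n, ∫ ω, f n ω ∂μ = 1 := by
    intro n
    have h1 := hindep.mgf_sum (t := υ₀) hmeas (Finset.range n)
    have h2 : mgf (∑ i ∈ Finset.range n, X i) μ υ₀ = ∫ ω, f n ω ∂μ := by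
      simp [mgf, hf, Finset.sum_apply]
    rw [← h2, h1]
    refine Finset.prod_eq_one fun i _ => ?_
    simpa [mgf] using himean i
  have hpos : ∀ n ω, 0 < f n ω := fun n ω => Real.exp_pos _
  -- the martingale property
  have hmart : Martingale f 𝒢 μ := by
    refine martingale_nat hadp hintf fun n => ?_
    have hsplit : f (n + 1) = f n * fun ω => Real.exp (υ₀ * X n ω) := by
      funext ω
      simp [hf, Finset.sum_range_succ, mul_add, Real.exp_add]
    have hindepn : Indep (MeasurableSpace.comap (X n) inferInstance) (G n) μ := by
      have h := ProbabilityTheory.indep_iSup_of_disjoint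
        (m := fun i => MeasurableSpace.comap (X i) inferInstance)
        (fun i => (hmeas i).comap_le) hindep
        (S := {n}) (T := Set.Iio n)
        (by simp [Set.disjoint_left])
      simpa [hG] using h
    have hgmeas : StronglyMeasurable[MeasurableSpace.comap (X n) inferInstance]
        fun ω => Real.exp (υ₀ * X n ω) := by
      have hXn : Measurable[MeasurableSpace.comap (X n) inferInstance] (X n) :=
        measurable_iff_comap_le.2 le_rfl
      exact ((hXn.const_mul υ₀).exp).stronglyMeasurable
    haveI : SigmaFinite (μ.trim (hGle n)) := by
      exact sigmaFiniteTrim_mono _ le_rfl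
    have hcond : μ[(fun ω => Real.exp (υ₀ * X n ω))|G n] =ᵐ[μ] fun _ => 1 := by
      have h := condExp_indep_eq (μ := μ) ((hmeas n).comap_le) (hGle n) hgmeas hindepn
      simpa [himean n] using h
    have hpull : μ[f (n + 1)|G n]
        =ᵐ[μ] f n * μ[(fun ω => Real.exp (υ₀ * X n ω))|G n] := by
      rw [hsplit]
      exact condExp_mul_of_stronglyMeasurable_left (hadp n) (hsplit ▸ hintf (n + 1)) (hinti n)
    refine Filter.EventuallyEq.symm (hpull.trans ?_)
    filter_upwards [hcond] with ω hω
    simp [hω]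
  have hsubm : Submartingale f 𝒢 μ := hmart.submartingale
  -- the threshold as an `ℝ≥0`
  set ε : ℝ≥0 := ⟨Real.exp (υ₀ * b), (Real.exp_pos _).le⟩ with hε
  have hε0 : ε ≠ 0 := by
    intro h
    have : (ε : ℝ) = 0 := by rw [h]; simp
    exact (Real.exp_pos (υ₀ * b)).ne' this
  -- the approximating events
  set A : ℕ → Set Ω := fun N =>
    {ω | (ε : ℝ) ≤ (Finset.range (N + 1)).sup' Finset.nonempty_range_add_one fun k => f k ω}
    with hA
  have hAmono : Monotone A := by
    intro N M h ω hω
    simp only [hA, Set.mem_setOf_eq] at hω ⊢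
    exact le_trans hω (Finset.sup'_mono _ (Finset.range_subset_range.2 (by omega))
      Finset.nonempty_range_add_one)
  have hAbound : ∀ N, μ (A N) ≤ ENNReal.ofReal (Real.exp (-υ₀ * b)) := by
    intro N
    have hmax := maximal_ineq hsubm (fun n ω => (hpos n ω).le) (ε := ε) N
    have hle1 : ENNReal.ofReal (∫ ω in A N, f N ω ∂μ) ≤ 1 := by
      have h1 : ∫ ω in A N, f N ω ∂μ ≤ ∫ ω, f N ω ∂μ :=
        setIntegral_le_integral (hintf N) (ae_of_all _ fun ω => (hpos N ω).le)
      calc ENNReal.ofReal (∫ ω in A N, f N ω ∂μ)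
          ≤ ENNReal.ofReal (∫ ω, f N ω ∂μ) := ENNReal.ofReal_le_ofReal h1
        _ = 1 := by rw [hmeanf N]; simp
    have hmul : μ (A N) * (ε : ℝ≥0∞) ≤ 1 := by
      rw [mul_comm]; exact le_trans hmax hle1
    have : μ (A N) ≤ 1 / (ε : ℝ≥0∞) :=
      (ENNReal.le_div_iff_mul_le (Or.inl (by exact_mod_cast hε0))
        (Or.inl ENNReal.coe_ne_top)).2 hmul
    refine le_trans this (le_of_eq ?_)
    rw [one_div, ← ENNReal.coe_inv hε0, ← ENNReal.ofReal_coe_nnreal]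
    congr 1
    rw [NNReal.coe_inv]
    show (Real.exp (υ₀ * b))⁻¹ = Real.exp (-υ₀ * b)
    rw [← Real.exp_neg, neg_mul]
  -- the target event is contained in the union of the approximating events
  have hsubset : {ω | ∃ n, 1 ≤ n ∧ b ≤ S n ω} ⊆ ⋃ N, A N := by
    rintro ω ⟨n, hn1, hnb⟩
    refine Set.mem_iUnion.2 ⟨n, ?_⟩
    show (ε : ℝ) ≤ (Finset.range (n + 1)).sup' Finset.nonempty_range_add_one fun k => f k ω
    have h1 : (ε : ℝ) ≤ f n ω := by
      show Real.exp (υ₀ * b) ≤ Real.exp (υ₀ * ∑ i ∈ Finset.range n, X i ω)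
      rw [← hS n ω]
      exact Real.exp_le_exp.2 (mul_le_mul_of_nonneg_left hnb hυ₀.le)
    exact le_trans h1 (Finset.le_sup' (fun k => f k ω) (Finset.mem_range.2 (Nat.lt_succ_self n)))
  calc μ {ω | ∃ n, 1 ≤ n ∧ b ≤ S n ω} ≤ μ (⋃ N, A N) := measure_mono hsubset
    _ = ⨆ N, μ (A N) := hAmono.directed_le.measure_iUnion
    _ ≤ ENNReal.ofReal (Real.exp (-υ₀ * b)) := iSup_le hAbound
end

section
/- Let (X_i)_{i≥1} be i.i.d. real random variables with E[exp(υ₀ X_1)] = 1 for some υ₀ > 0, and let W be the CUSUM statistic: W_0 = 0, W_{n+1} = max(0, W_n + X_{n+1}). Then for every n ≥ 0 and every b ≥ 0, P(W_n ≥ b) ≤ exp(−υ₀ b). -/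
open MeasureTheory ProbabilityTheory

/-- The CUSUM recursion as an explicit function of the sequence of increments. -/
def cusumFn : ℕ → (ℕ → ℝ) → ℝ
  | 0, _ => 0
  | (n+1), x => max 0 (cusumFn n x + x n)

lemma cusumFn_congr {n : ℕ} {x y : ℕ → ℝ} (h : ∀ i < n, x i = y i) :
    cusumFn n x = cusumFn n y := by
  induction n with
  | zero => rfl
  | succ n ih =>
    simp only [cusumFn]
    rw [ih (fun i hi => h i (Nat.lt_succ_of_lt hi)), h n (Nat.lt_succ_self n)]

lemma cusumFn_measurable (n : ℕ) : Measurable (cusumFn n) := by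
  induction n with
  | zero => exact measurable_const
  | succ n ih =>
    exact measurable_const.max (ih.add (measurable_pi_apply n))

/-- Uniform-in-time exponential tail bound for the CUSUM statistic:
if `E[exp(υ₀ X₁)] = 1` for some `υ₀ > 0` and `W` is the CUSUM recursion
`W 0 = 0`, `W (n+1) = max(0, W n + X (n+1))`, then `P(W n ≥ b) ≤ exp(−υ₀ b)`
for every `n ≥ 0` and every `b ≥ 0`. -/
theorem cusum_tail_bound
    {Ω : Type*} [MeasurableSpace Ω] (μ : Measure Ω) [IsProbabilityMeasure μ]
    (X : ℕ → Ω → ℝ)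
    (hmeas : ∀ i, Measurable (X i))
    (hindep : iIndepFun X μ)
    (hident : ∀ i, μ.map (X i) = μ.map (X 0))
    (υ₀ : ℝ) (hυ₀ : 0 < υ₀)
    (hmgf : ∫ ω, Real.exp (υ₀ * X 0 ω) ∂μ = 1)
    (W : ℕ → Ω → ℝ)
    (hW0 : ∀ ω, W 0 ω = 0)
    (hW : ∀ n ω, W (n + 1) ω = max 0 (W n ω + X n ω))
    (n : ℕ) (b : ℝ) (hb : 0 ≤ b) :
    μ {ω | b ≤ W n ω} ≤ ENNReal.ofReal (Real.exp (-υ₀ * b)) := by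
  clear hb
  -- W n as an explicit function of X 0, ..., X (n-1)
  have hWfn : ∀ n ω, W n ω = cusumFn n (fun i => X i ω) := by
    intro n
    induction n with
    | zero => intro ω; rw [hW0]; rfl
    | succ n ih => intro ω; rw [hW, ih]; rfl
  have hWmeas : ∀ n, Measurable (W n) := by
    intro n
    have : W n = fun ω => cusumFn n (fun i => X i ω) := funext (hWfn n)
    rw [this]
    exact (cusumFn_measurable n).comp (measurable_pi_lambda _ (fun i => hmeas i))
  -- integrability of exp(υ₀ X 0)
  have hint : Integrable (fun ω => Real.exp (υ₀ * X 0 ω)) μ := by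
    by_contra h
    rw [integral_undef h] at hmgf
    exact one_ne_zero hmgf.symm
  -- lintegral form of the mgf condition
  have hlmgf : ∫⁻ ω, ENNReal.ofReal (Real.exp (υ₀ * X 0 ω)) ∂μ = 1 := by
    rw [← ofReal_integral_eq_lintegral_ofReal hint
      (Filter.Eventually.of_forall (fun ω => (Real.exp_pos _).le)), hmgf, ENNReal.ofReal_one]
  -- independence of W n and X n
  have hindWX : ∀ n, IndepFun (W n) (X n) μ := by
    intro n
    classical
    have hdisj : Disjoint (Finset.range n) ({n} : Finset ℕ) := by
      simp [Finset.disjoint_singleton_right]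
    have h1 := hindep.indepFun_finset (Finset.range n) {n} hdisj hmeas
    set φ : ({i // i ∈ Finset.range n} → ℝ) → ℝ :=
      fun y => cusumFn n (fun i => if h : i ∈ Finset.range n then y ⟨i, h⟩ else 0) with hφdef
    set ψ : ({i // i ∈ ({n} : Finset ℕ)} → ℝ) → ℝ :=
      fun y => y ⟨n, Finset.mem_singleton_self n⟩ with hψdef
    have hφ : Measurable φ := by
      apply (cusumFn_measurable n).comp
      apply measurable_pi_lambda
      intro i
      by_cases h : i ∈ Finset.range n
      · simp only [h, dif_pos]; exact measurable_pi_apply _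
      · simp only [h, dif_neg, not_false_iff]; exact measurable_const
    have hψ : Measurable ψ := measurable_pi_apply _
    have h2 := h1.comp hφ hψ
    apply h2.congr
    · refine Filter.Eventually.of_forall (fun ω => ?_)
      show φ (fun i : {i // i ∈ Finset.range n} => X i ω) = W n ω
      rw [hWfn n ω, hφdef]
      apply cusumFn_congr
      intro i hi
      simp [Finset.mem_range.mpr hi]
    · exact Filter.Eventually.of_forall (fun ω => rfl)
  -- main claim by induction, for all real b
  induction n generalizing b with
  | zero =>
    rcases le_or_gt b 0 with hb0 | hb0
    · calc μ {ω | b ≤ W 0 ω} ≤ 1 := prob_le_one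
        _ ≤ ENNReal.ofReal (Real.exp (-υ₀ * b)) := by
            rw [← ENNReal.ofReal_one]
            exact ENNReal.ofReal_le_ofReal (Real.one_le_exp (by nlinarith))
    · have : {ω | b ≤ W 0 ω} = ∅ := by
        ext ω; simp only [Set.mem_setOf_eq, Set.mem_empty_iff_false, iff_false, not_le, hW0]
        exact hb0
      rw [this]
      simp
  | succ n ih =>
    rcases le_or_gt b 0 with hb0 | hb0
    · calc μ {ω | b ≤ W (n+1) ω} ≤ 1 := prob_le_one
        _ ≤ ENNReal.ofReal (Real.exp (-υ₀ * b)) := by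
            rw [← ENNReal.ofReal_one]
            exact ENNReal.ofReal_le_ofReal (Real.one_le_exp (by nlinarith))
    · -- b > 0 : the event is {b ≤ W n + X n}
      have hset : {ω | b ≤ W (n+1) ω} = {ω | b ≤ W n ω + X n ω} := by
        ext ω
        simp only [Set.mem_setOf_eq, hW n ω, le_max_iff]
        constructor
        · rintro (h | h)
          · linarith
          · exact h
        · exact fun h => Or.inr h
      rw [hset]
      -- express via the joint law = product law
      have hmapprod : μ.map (fun ω => (W n ω, X n ω)) = (μ.map (W n)).prod (μ.map (X n)) :=
        (indepFun_iff_map_prod_eq_prod_map_map (hWmeas n).aemeasurable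
          (hmeas n).aemeasurable).mp (hindWX n)
      have hSmeas : MeasurableSet {p : ℝ × ℝ | b ≤ p.1 + p.2} :=
        measurableSet_le measurable_const (measurable_fst.add measurable_snd)
      have h1 : μ {ω | b ≤ W n ω + X n ω}
          = ((μ.map (W n)).prod (μ.map (X n))) {p : ℝ × ℝ | b ≤ p.1 + p.2} := by
        rw [← hmapprod, Measure.map_apply ((hWmeas n).prodMk (hmeas n)) hSmeas]
        rfl
      rw [h1, Measure.prod_apply_symm hSmeas]
      have h2 : ∀ x : ℝ, (μ.map (W n)) ((fun w => (w, x)) ⁻¹' {p : ℝ × ℝ | b ≤ p.1 + p.2})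
          ≤ ENNReal.ofReal (Real.exp (-υ₀ * (b - x))) := by
        intro x
        have hpre : ((fun w => (w, x)) ⁻¹' {p : ℝ × ℝ | b ≤ p.1 + p.2}) = Set.Ici (b - x) := by
          ext w; simp only [Set.mem_preimage, Set.mem_setOf_eq, Set.mem_Ici]
          constructor <;> intro h <;> linarith
        rw [hpre, Measure.map_apply (hWmeas n) (measurableSet_Ici (a := b - x))]
        exact ih (b - x)
      calc ∫⁻ x, (μ.map (W n)) ((fun w => (w, x)) ⁻¹' {p : ℝ × ℝ | b ≤ p.1 + p.2}) ∂(μ.map (X n))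
          ≤ ∫⁻ x, ENNReal.ofReal (Real.exp (-υ₀ * (b - x))) ∂(μ.map (X n)) :=
            lintegral_mono h2
        _ = ∫⁻ x, ENNReal.ofReal (Real.exp (-υ₀ * b)) * ENNReal.ofReal (Real.exp (υ₀ * x))
              ∂(μ.map (X n)) := by
            congr 1; ext x
            rw [← ENNReal.ofReal_mul (Real.exp_pos _).le, ← Real.exp_add]
            ring_nf
        _ = ENNReal.ofReal (Real.exp (-υ₀ * b)) *
              ∫⁻ x, ENNReal.ofReal (Real.exp (υ₀ * x)) ∂(μ.map (X n)) := by
            have hm : Measurable fun x : ℝ => ENNReal.ofReal (Real.exp (υ₀ * x)) := by fun_prop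
            rw [lintegral_const_mul _ hm]
        _ = ENNReal.ofReal (Real.exp (-υ₀ * b)) := by
            have hm : Measurable fun x : ℝ => ENNReal.ofReal (Real.exp (υ₀ * x)) := by fun_prop
            rw [hident n, lintegral_map hm (hmeas 0), hlmgf, mul_one]
end

section
/- Let (X_i)_{i≥1} be i.i.d. real random variables with log moment generating function Λ(υ) = log E[exp(υ X_1)], and let S_0 = 0, S_n = X_1 + ... + X_n. Let τ be an ℕ-valued random variable independent of the sequence (X_i), and suppose there are constants C ≥ 0 and ρ > 0 with P(τ ≥ n) ≤ C exp(−ρ n) for all n ≥ 1. If υ > 0 satisfies Λ(υ) < ρ (in particular Λ(υ) finite), then for every b > 0, P( ∃ k with 1 ≤ k < τ and S_k ≥ b ) ≤ C exp(−υ b) / (1 − exp(Λ(υ) − ρ)). -/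
open MeasureTheory ProbabilityTheory

/-- Premature-crossing bound.  Let `S n = X 1 + ⋯ + X n` be a random walk with
i.i.d. increments whose log moment generating function at `υ` is `Λυ`,
i.e. `E[exp(υ X₁)] = exp Λυ`, and let `τ` be an ℕ-valued change time,
independent of the increments, with tail `P(τ ≥ n) ≤ C exp(−ρ n)` for `n ≥ 1`.
If `υ > 0` and `Λυ < ρ`, then for every `b > 0`,
`P(∃ k, 1 ≤ k < τ, S k ≥ b) ≤ C exp(−υ b) / (1 − exp(Λυ − ρ))`. -/
theorem eagerness_bound
    {Ω : Type*} [MeasurableSpace Ω] (μ : Measure Ω) [IsProbabilityMeasure μ]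
    (X : ℕ → Ω → ℝ)
    (hmeas : ∀ i, Measurable (X i))
    (hindep : iIndepFun X μ)
    (hident : ∀ i, μ.map (X i) = μ.map (X 0))
    (S : ℕ → Ω → ℝ)
    (hS : ∀ n ω, S n ω = ∑ i ∈ Finset.range n, X i ω)
    (τ : Ω → ℕ) (hτmeas : Measurable τ)
    (hτindep : IndepFun (fun ω => fun i => X i ω) τ μ)
    (C ρ : ℝ) (hC : 0 ≤ C) (hρ : 0 < ρ)
    (htail : ∀ n : ℕ, 1 ≤ n → μ {ω | n ≤ τ ω} ≤ ENNReal.ofReal (C * Real.exp (-ρ * n)))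
    (υ Λυ : ℝ) (hυ : 0 < υ)
    (hmgf_int : Integrable (fun ω => Real.exp (υ * X 0 ω)) μ)
    (hΛ : ∫ ω, Real.exp (υ * X 0 ω) ∂μ = Real.exp Λυ)
    (hΛρ : Λυ < ρ)
    (b : ℝ) (hb : 0 < b) :
    μ {ω | ∃ k, 1 ≤ k ∧ k < τ ω ∧ b ≤ S k ω}
      ≤ ENNReal.ofReal (C * Real.exp (-υ * b) / (1 - Real.exp (Λυ - ρ))) := by
  set r : ℝ := Real.exp (Λυ - ρ) with hrdef
  have hr0 : 0 < r := Real.exp_pos _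
  have hr1 : r < 1 := by
    rw [hrdef, Real.exp_lt_one_iff]; linarith
  set c : ℝ := C * Real.exp (-υ * b) with hcdef
  have hc0 : 0 ≤ c := mul_nonneg hC (Real.exp_pos _).le
  -- per-increment integrability and mgf
  have hint_i : ∀ i, Integrable (fun ω => Real.exp (υ * X i ω)) μ := by
    intro i
    have hg : AEStronglyMeasurable (fun x : ℝ => Real.exp (υ * x)) (μ.map (X i)) :=
      ((measurable_const_mul υ).exp).aestronglyMeasurable
    have h0 : Integrable (fun x : ℝ => Real.exp (υ * x)) (μ.map (X i)) := by
      rw [hident i]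
      rw [integrable_map_measure (by rw [← hident i]; exact hg) (hmeas 0).aemeasurable]
      exact hmgf_int
    have := (integrable_map_measure hg (hmeas i).aemeasurable).mp h0
    exact this
  have hmgf_i : ∀ i, mgf (X i) μ υ = Real.exp Λυ := by
    intro i
    have h1 : mgf (X i) μ υ = ∫ x, Real.exp (υ * x) ∂(μ.map (X i)) := by
      rw [integral_map (hmeas i).aemeasurable
        ((measurable_const_mul υ).exp).aestronglyMeasurable]
      rfl
    have h2 : mgf (X 0) μ υ = ∫ x, Real.exp (υ * x) ∂(μ.map (X 0)) := by
      rw [integral_map (hmeas 0).aemeasurable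
        ((measurable_const_mul υ).exp).aestronglyMeasurable]
      rfl
    rw [h1, hident i, ← h2]
    exact hΛ
  -- the events
  set A : ℕ → Set Ω := fun k => {ω | 1 ≤ k ∧ k < τ ω ∧ b ≤ S k ω} with hA
  have hsub : {ω | ∃ k, 1 ≤ k ∧ k < τ ω ∧ b ≤ S k ω} ⊆ ⋃ k, A k := by
    intro ω ⟨k, h1, h2, h3⟩
    exact Set.mem_iUnion.mpr ⟨k, h1, h2, h3⟩
  -- per-k bound
  have hkey : ∀ k : ℕ, μ (A k) ≤ ENNReal.ofReal c * (ENNReal.ofReal r) ^ k := by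
    intro k
    rcases Nat.eq_zero_or_pos k with hk0 | hk1
    · have : A k = ∅ := by
        ext ω; simp [hA, hk0]
      simp [this]
    · -- Chernoff bound for S k
      have hSsum : ∀ ω, S k ω = (∑ i ∈ Finset.range k, X i) ω := by
        intro ω; rw [hS]; simp [Finset.sum_apply]
      have hint_sum : Integrable (fun ω => Real.exp (υ * (∑ i ∈ Finset.range k, X i) ω)) μ :=
        hindep.integrable_exp_mul_sum hmeas (fun i _ => hint_i i)
      have hcher := measure_ge_le_exp_mul_mgf (X := ∑ i ∈ Finset.range k, X i) (μ := μ)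
        b hυ.le hint_sum
      have hmgf_sum : mgf (∑ i ∈ Finset.range k, X i) μ υ = Real.exp Λυ ^ k := by
        rw [hindep.mgf_sum hmeas]
        simp [hmgf_i]
      rw [hmgf_sum] at hcher
      -- independence splitting
      set E : Set (ℕ → ℝ) := {f | b ≤ ∑ i ∈ Finset.range k, f i} with hE
      have hEmeas : MeasurableSet E := by
        have : Measurable fun f : ℕ → ℝ => ∑ i ∈ Finset.range k, f i :=
          Finset.measurable_sum _ (fun i _ => measurable_pi_apply i)
        exact measurableSet_le measurable_const this
      have hFmeas : MeasurableSet (Set.Ici (k + 1) : Set ℕ) := measurableSet_Ici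
      have hsplit := hτindep.measure_inter_preimage_eq_mul (s := E) (t := Set.Ici (k + 1)) hEmeas hFmeas
      have hAsub : A k ⊆ ((fun ω => fun i => X i ω) ⁻¹' E) ∩ (τ ⁻¹' Set.Ici (k + 1)) := by
        intro ω ⟨h1, h2, h3⟩
        refine ⟨?_, ?_⟩
        · show b ≤ ∑ i ∈ Finset.range k, X i ω
          rw [← hS]; exact h3
        · exact h2
      have hpre1 : (fun ω => fun i => X i ω) ⁻¹' E = {ω | b ≤ (∑ i ∈ Finset.range k, X i) ω} := by
        ext ω; simp [hE, Finset.sum_apply]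
      have h1 : μ ((fun ω => fun i => X i ω) ⁻¹' E)
          ≤ ENNReal.ofReal (Real.exp (-υ * b) * Real.exp Λυ ^ k) := by
        rw [hpre1]
        rw [← ENNReal.ofReal_toReal (measure_ne_top μ _)]
        exact ENNReal.ofReal_le_ofReal hcher
      have h2 : μ (τ ⁻¹' Set.Ici (k + 1))
          ≤ ENNReal.ofReal (C * Real.exp (-ρ * (k + 1))) := by
        have h := htail (k + 1) (by omega)
        have hcast : -ρ * ((k:ℝ) + 1) = -ρ * ((k + 1 : ℕ) : ℝ) := by push_cast; ring
        rw [hcast]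
        exact h
      calc μ (A k) ≤ μ (((fun ω => fun i => X i ω) ⁻¹' E) ∩ (τ ⁻¹' Set.Ici (k + 1))) :=
            measure_mono hAsub
        _ = μ ((fun ω => fun i => X i ω) ⁻¹' E) * μ (τ ⁻¹' Set.Ici (k + 1)) := hsplit
        _ ≤ ENNReal.ofReal (Real.exp (-υ * b) * Real.exp Λυ ^ k)
              * ENNReal.ofReal (C * Real.exp (-ρ * (k + 1))) := by
            exact mul_le_mul' h1 h2
        _ = ENNReal.ofReal ((Real.exp (-υ * b) * Real.exp Λυ ^ k)
              * (C * Real.exp (-ρ * (k + 1)))) := by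
            exact (ENNReal.ofReal_mul (by positivity)).symm
        _ ≤ ENNReal.ofReal c * (ENNReal.ofReal r) ^ k := by
            rw [← ENNReal.ofReal_pow hr0.le, ← ENNReal.ofReal_mul hc0]
            apply ENNReal.ofReal_le_ofReal
            have hexp : Real.exp Λυ ^ k * Real.exp (-ρ * (k + 1)) ≤ r ^ k := by
              rw [← Real.exp_nat_mul, ← Real.exp_add, hrdef, ← Real.exp_nat_mul]
              apply Real.exp_le_exp.mpr
              have : (0:ℝ) ≤ (k:ℝ) := Nat.cast_nonneg k
              nlinarith [hρ.le]
            calc Real.exp (-υ * b) * Real.exp Λυ ^ k * (C * Real.exp (-ρ * (k + 1)))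
                = (C * Real.exp (-υ * b)) * (Real.exp Λυ ^ k * Real.exp (-ρ * (k + 1))) := by
                  ring
              _ ≤ c * r ^ k := by
                  apply mul_le_mul_of_nonneg_left hexp hc0
  -- sum up
  have hgeom : ∑' k : ℕ, ENNReal.ofReal c * (ENNReal.ofReal r) ^ k
      = ENNReal.ofReal (c / (1 - r)) := by
    rw [ENNReal.tsum_mul_left, ENNReal.tsum_geometric]
    rw [ENNReal.ofReal_div_of_pos (by linarith), div_eq_mul_inv]
    congr 1
    rw [← ENNReal.ofReal_one, ← ENNReal.ofReal_sub _ hr0.le]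
  calc μ {ω | ∃ k, 1 ≤ k ∧ k < τ ω ∧ b ≤ S k ω} ≤ μ (⋃ k, A k) := measure_mono hsub
    _ ≤ ∑' k, μ (A k) := measure_iUnion_le _
    _ ≤ ∑' k : ℕ, ENNReal.ofReal c * (ENNReal.ofReal r) ^ k := ENNReal.tsum_le_tsum hkey
    _ = ENNReal.ofReal (c / (1 - r)) := hgeom
end

section
/- Let (X_i)_{i≥1} be i.i.d. integrable real random variables with m₁ := E[X_1] > 0, let W be the CUSUM statistic W_0 = 0, W_{n+1} = max(0, W_n + X_{n+1}), and for b > 0 let T_b = inf{ n ≥ 0 : W_n ≥ b }. Then T_b < ∞ almost surely for every b > 0, and T_b / b → 1/m₁ almost surely as b → ∞. -/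
open MeasureTheory ProbabilityTheory Filter
open Topology Finset

private lemma cusum_ge_sub (X : ℕ → ℝ) (W : ℕ → ℝ) (hW0 : W 0 = 0)
    (hW : ∀ n, W (n + 1) = max 0 (W n + X n)) :
    ∀ n k, k ≤ n → (∑ i ∈ range n, X i) - (∑ i ∈ range k, X i) ≤ W n := by
  intro n
  induction n with
  | zero => intro k hk; obtain rfl := Nat.le_zero.mp hk; simp [hW0]
  | succ n ih =>
    intro k hk
    rcases eq_or_lt_of_le hk with rfl | h
    · simp [hW]
    · have hkn : k ≤ n := Nat.lt_succ_iff.mp h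
      have h1 := ih k hkn
      rw [hW, Finset.sum_range_succ]
      have : (∑ i ∈ range n, X i) + X n - ∑ i ∈ range k, X i
          = ((∑ i ∈ range n, X i) - ∑ i ∈ range k, X i) + X n := by ring
      rw [this]
      exact le_trans (by linarith) (le_max_right _ _)

private lemma cusum_exists_eq (X : ℕ → ℝ) (W : ℕ → ℝ) (hW0 : W 0 = 0)
    (hW : ∀ n, W (n + 1) = max 0 (W n + X n)) :
    ∀ n, ∃ k ≤ n, W n = (∑ i ∈ range n, X i) - (∑ i ∈ range k, X i) := by
  intro n
  induction n with
  | zero => exact ⟨0, le_rfl, by simp [hW0]⟩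
  | succ n ih =>
    obtain ⟨k, hk, hWk⟩ := ih
    rcases le_or_gt (W n + X n) 0 with h | h
    · exact ⟨n + 1, le_rfl, by simp [hW, max_eq_left h]⟩
    · refine ⟨k, hk.trans (Nat.le_succ n), ?_⟩
      rw [hW, max_eq_right h.le, hWk, Finset.sum_range_succ]
      ring

/-- Law of large numbers for the CUSUM first-passage time.  If the i.i.d.
increments are integrable with positive mean `m₁` and `W` is the CUSUM
recursion `W 0 = 0`, `W (n+1) = max(0, W n + X (n+1))`, then for every
threshold `b > 0` the hitting time `T_b = inf { n : W n ≥ b }` is almost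
surely finite, and `T_b / b → 1/m₁` almost surely as `b → ∞`. -/
theorem cusum_hitting_time_lln
    {Ω : Type*} [MeasurableSpace Ω] (μ : Measure Ω) [IsProbabilityMeasure μ]
    (X : ℕ → Ω → ℝ)
    (hmeas : ∀ i, Measurable (X i))
    (hindep : iIndepFun X μ)
    (hident : ∀ i, μ.map (X i) = μ.map (X 0))
    (hint : Integrable (X 0) μ)
    (m₁ : ℝ) (hm₁ : m₁ = ∫ ω, X 0 ω ∂μ) (hm₁pos : 0 < m₁)
    (W : ℕ → Ω → ℝ)
    (hW0 : ∀ ω, W 0 ω = 0)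
    (hW : ∀ n ω, W (n + 1) ω = max 0 (W n ω + X n ω))
    (T : ℝ → Ω → ℕ)
    (hT : ∀ b ω, T b ω = sInf {n : ℕ | b ≤ W n ω}) :
    ∀ᵐ ω ∂μ,
      (∀ b : ℝ, 0 < b → ∃ n, b ≤ W n ω) ∧
      Tendsto (fun b : ℝ => (T b ω : ℝ) / b) atTop (nhds (1 / m₁)) := by
  -- Strong law of large numbers for the increments
  have hident' : ∀ i, IdentDistrib (X i) (X 0) μ μ := fun i =>
    ⟨(hmeas i).aemeasurable, (hmeas 0).aemeasurable, hident i⟩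
  have hpair : Pairwise (Function.onFun (IndepFun · · μ) X) := fun i j hij =>
    hindep.indepFun hij
  have hslln := strong_law_ae_real X hint hpair hident'
  filter_upwards [hslln] with ω hS
  -- notation
  set S : ℕ → ℝ := fun n => ∑ i ∈ range n, X i ω with hSdef
  set w : ℕ → ℝ := fun n => W n ω with hwdef
  have hm₁' : (μ[X 0]) = m₁ := hm₁.symm
  rw [hm₁'] at hS
  -- deterministic facts
  have hlow : ∀ n k, k ≤ n → S n - S k ≤ w n :=
    cusum_ge_sub (fun n => X n ω) w (hW0 ω) (fun n => hW n ω)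
  have hex : ∀ n, ∃ k ≤ n, w n = S n - S k :=
    cusum_exists_eq (fun n => X n ω) w (hW0 ω) (fun n => hW n ω)
  have hS0 : S 0 = 0 := by simp [hSdef]
  have hwS : ∀ n, S n ≤ w n := fun n => by
    have := hlow n 0 (Nat.zero_le n); rwa [hS0, sub_zero] at this
  have hwnn : ∀ n, 0 ≤ w n := fun n => by
    have := hlow n n le_rfl; simpa using this
  -- S n → ∞
  have hS' : Tendsto (fun n : ℕ => S n / n) atTop (𝓝 m₁) := hS
  have hSt : Tendsto S atTop atTop := by
    have h1 : Tendsto (fun n : ℕ => (n : ℝ) * (S n / n)) atTop atTop :=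
      tendsto_natCast_atTop_atTop.atTop_mul_pos hm₁pos hS'
    refine h1.congr' ?_
    filter_upwards [eventually_ge_atTop 1] with n hn
    have : (n : ℝ) ≠ 0 := Nat.cast_ne_zero.mpr (by omega)
    field_simp
  -- lower bound for S
  obtain ⟨N, hN⟩ := (hSt.eventually_ge_atTop 0).exists_forall_of_atTop
  set c : ℝ := (Finset.range (N + 1)).inf' (by simp) (fun k => min 0 (S k)) with hcdef
  have hc0 : c ≤ 0 := by
    have := Finset.inf'_le (b := 0) (fun k => min 0 (S k))
      (Finset.mem_range.mpr (Nat.lt_succ_of_le (Nat.zero_le N)))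
    exact this.trans (min_le_left _ _)
  have hcS : ∀ k, c ≤ S k := by
    intro k
    rcases le_or_gt k N with h | h
    · exact (Finset.inf'_le (fun k => min 0 (S k))
        (Finset.mem_range.mpr (Nat.lt_succ_of_le h))).trans (min_le_right _ _)
    · exact hc0.trans (hN k h.le)
  have hwub : ∀ n, w n ≤ S n - c := by
    intro n
    obtain ⟨k, _, hk⟩ := hex n
    rw [hk]
    linarith [hcS k]
  -- w n / n → m₁
  have hL : Tendsto (fun n : ℕ => w n / n) atTop (𝓝 m₁) := by
    have hub : Tendsto (fun n : ℕ => S n / n - c / n) atTop (𝓝 m₁) := by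
      have := hS'.sub (tendsto_const_div_atTop_nhds_zero_nat c)
      simpa using this
    refine tendsto_of_tendsto_of_tendsto_of_le_of_le' hS' hub ?_ ?_
    · filter_upwards [eventually_ge_atTop 1] with n hn
      have hn' : (0:ℝ) < n := by exact_mod_cast Nat.lt_of_lt_of_le Nat.zero_lt_one hn
      exact (div_le_div_iff_of_pos_right hn').mpr (hwS n)
    · filter_upwards [eventually_ge_atTop 1] with n hn
      have hn' : (0:ℝ) < n := by exact_mod_cast Nat.lt_of_lt_of_le Nat.zero_lt_one hn
      have := (div_le_div_iff_of_pos_right hn').mpr (hwub n)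
      rwa [sub_div] at this
  -- w → ∞
  have hWt : Tendsto w atTop atTop := tendsto_atTop_mono hwS hSt
  have hhit : ∀ b : ℝ, ∃ n, b ≤ w n := fun b => (hWt.eventually_ge_atTop b).exists
  refine ⟨fun b _ => hhit b, ?_⟩
  -- hitting time
  set g : ℝ → ℕ := fun b => T b ω with hgdef
  have hgeq : ∀ b, g b = sInf {n : ℕ | b ≤ w n} := fun b => hT b ω
  have hgmem : ∀ b, b ≤ w (g b) := by
    intro b
    have : g b ∈ {n : ℕ | b ≤ w n} := by
      rw [hgeq]; exact Nat.sInf_mem (hhit b)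
    exact this
  have hglt : ∀ b n, n < g b → w n < b := by
    intro b n hn
    by_contra h
    push_neg at h
    have : g b ≤ n := by rw [hgeq]; exact Nat.sInf_le h
    omega
  -- g → ∞ as b → ∞
  have hgt : Tendsto g atTop atTop := by
    rw [tendsto_atTop]
    intro N
    set B : ℝ := (∑ k ∈ range N, w k) + 1 with hBdef
    filter_upwards [eventually_ge_atTop B] with b hb
    by_contra h
    push_neg at h
    have h1 : w (g b) ≤ ∑ k ∈ range N, w k :=
      Finset.single_le_sum (fun k _ => hwnn k) (Finset.mem_range.mpr h)
    have := hgmem b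
    have : b ≤ (∑ k ∈ range N, w k) := le_trans this h1
    linarith
  -- ratio lemma : ((n-1 : ℕ) : ℝ) / n → 1
  have hratio : Tendsto (fun b : ℝ => ((g b - 1 : ℕ) : ℝ) / (g b : ℝ)) atTop (𝓝 1) := by
    have h1 : Tendsto (fun n : ℕ => ((n - 1 : ℕ) : ℝ) / (n : ℝ)) atTop (𝓝 1) := by
      have h2 : Tendsto (fun n : ℕ => 1 - 1 / (n : ℝ)) atTop (𝓝 1) := by
        have := tendsto_one_div_atTop_nhds_zero_nat (𝕜 := ℝ)
        simpa using (tendsto_const_nhds.sub this)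
      refine h2.congr' ?_
      filter_upwards [eventually_ge_atTop 1] with n hn
      have hn0 : (n : ℝ) ≠ 0 := Nat.cast_ne_zero.mpr (by omega)
      rw [Nat.cast_sub hn]
      field_simp
      simp
    exact h1.comp hgt
  have hcomp1 : Tendsto (fun b : ℝ => w (g b) / (g b : ℝ)) atTop (𝓝 m₁) := hL.comp hgt
  have hcomp2 : Tendsto (fun b : ℝ => w (g b - 1) / ((g b - 1 : ℕ) : ℝ)) atTop (𝓝 m₁) :=
    hL.comp ((tendsto_sub_atTop_nat 1).comp hgt)
  -- squeeze : b / g b → m₁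
  have hbg : Tendsto (fun b : ℝ => b / (g b : ℝ)) atTop (𝓝 m₁) := by
    have hlb : Tendsto (fun b : ℝ =>
        (w (g b - 1) / ((g b - 1 : ℕ) : ℝ)) * (((g b - 1 : ℕ) : ℝ) / (g b : ℝ)))
        atTop (𝓝 m₁) := by
      have := hcomp2.mul hratio
      simpa using this
    refine tendsto_of_tendsto_of_tendsto_of_le_of_le' hlb hcomp1 ?_ ?_
    · filter_upwards [hgt.eventually_ge_atTop 2] with b hb
      have hg1 : (1:ℕ) ≤ g b - 1 := by omega
      have hgm0 : ((g b - 1 : ℕ) : ℝ) ≠ 0 := Nat.cast_ne_zero.mpr (by omega)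
      have hgpos : (0:ℝ) < (g b : ℝ) := by exact_mod_cast Nat.lt_of_lt_of_le Nat.zero_lt_two hb
      have heq : (w (g b - 1) / ((g b - 1 : ℕ) : ℝ)) * (((g b - 1 : ℕ) : ℝ) / (g b : ℝ))
          = w (g b - 1) / (g b : ℝ) := div_mul_div_cancel₀ hgm0
      rw [heq]
      have hwlt : w (g b - 1) < b := hglt b (g b - 1) (by omega)
      exact (div_le_div_iff_of_pos_right hgpos).mpr hwlt.le
    · filter_upwards [hgt.eventually_ge_atTop 2] with b hb
      have hgpos : (0:ℝ) < (g b : ℝ) := by exact_mod_cast Nat.lt_of_lt_of_le Nat.zero_lt_two hb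
      exact (div_le_div_iff_of_pos_right hgpos).mpr (hgmem b)
  -- conclusion by inversion
  have hfin : Tendsto (fun b : ℝ => (b / (g b : ℝ))⁻¹) atTop (𝓝 m₁⁻¹) :=
    hbg.inv₀ (ne_of_gt hm₁pos)
  have : Tendsto (fun b : ℝ => (g b : ℝ) / b) atTop (𝓝 m₁⁻¹) := by
    refine hfin.congr' ?_
    filter_upwards with b
    rw [inv_div]
  rw [one_div]
  exact this
end

section
/- Let (X_i)_{i≥1} be i.i.d. real random variables with partial sums S_0 = 0, S_n = X_1 + ... + X_n, and let W be the CUSUM statistic W_0 = 0, W_{n+1} = max(0, W_n + X_{n+1}). Then for every x ∈ ℝ, the sequence n ↦ P(W_n ≤ x) is nonincreasing and converges to P( sup_{k ≥ 0} S_k ≤ x ). If moreover X_1 is integrable with E[X_1] < 0, then sup_{k ≥ 0} S_k is almost surely finite, so W_n converges in distribution to the almost surely finite random variable sup_{k ≥ 0} S_k. -/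
open MeasureTheory ProbabilityTheory Filter

/-- Joint law of any injectively reindexed finite subfamily of an iid family is the
product measure. -/
lemma cusum_aux_map_tuple_eq_pi {Ω : Type*} [MeasurableSpace Ω] (μ : Measure Ω)
    [IsProbabilityMeasure μ] (X : ℕ → Ω → ℝ)
    (hmeas : ∀ i, Measurable (X i))
    (hindep : iIndepFun X μ)
    (hident : ∀ i, μ.map (X i) = μ.map (X 0))
    (n : ℕ) (σ : Fin n → ℕ) (hσ : Function.Injective σ) :
    μ.map (fun ω (i : Fin n) => X (σ i) ω) =
      Measure.pi (fun _ : Fin n => μ.map (X 0)) := by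
  have hT : Measurable (fun ω (i : Fin n) => X (σ i) ω) :=
    measurable_pi_lambda _ fun i => hmeas (σ i)
  have hprob : IsProbabilityMeasure (μ.map (X 0)) :=
    Measure.isProbabilityMeasure_map (hmeas 0).aemeasurable
  refine (Measure.pi_eq fun s hs => ?_).symm
  rw [Measure.map_apply hT (MeasurableSet.univ_pi hs)]
  have hpre : (fun ω (i : Fin n) => X (σ i) ω) ⁻¹' Set.pi Set.univ s
      = ⋂ i : Fin n, X (σ i) ⁻¹' s i := by
    ext ω; simp [Set.mem_pi]
  set B : ℕ → Set ℝ := fun j => ⋂ (i : Fin n) (_ : σ i = j), s i with hBdef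
  have hBσ : ∀ i : Fin n, B (σ i) = s i := by
    intro i
    apply subset_antisymm
    · intro y hy
      simp only [hBdef, Set.mem_iInter] at hy
      exact hy i rfl
    · intro y hy
      simp only [hBdef, Set.mem_iInter]
      intro i' h
      rw [hσ h]; exact hy
  have hB : ∀ j, MeasurableSet (B j) :=
    fun j => MeasurableSet.iInter fun i => MeasurableSet.iInter fun _ => hs i
  set F : Finset ℕ := Finset.univ.map ⟨σ, hσ⟩ with hFdef
  have hinter : (⋂ i : Fin n, X (σ i) ⁻¹' s i) = ⋂ j ∈ F, X j ⁻¹' B j := by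
    ext ω
    simp only [Set.mem_iInter, hFdef, Finset.mem_map, Finset.mem_univ,
      Function.Embedding.coeFn_mk, true_and, Set.mem_preimage]
    constructor
    · rintro h j ⟨i, rfl⟩
      rw [hBσ i]; exact h i
    · intro h i
      have := h (σ i) ⟨i, rfl⟩
      rwa [hBσ i] at this
  rw [hpre, hinter, hindep.measure_inter_preimage_eq_mul F (fun j _ => hB j)]
  rw [hFdef, Finset.prod_map]
  refine Finset.prod_congr rfl fun i _ => ?_
  simp only [Function.Embedding.coeFn_mk]
  rw [hBσ i, ← Measure.map_apply (hmeas (σ i)) (hs i), hident (σ i)]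

/-- Reindexing a sum over an initial segment of `Fin n`. -/
lemma cusum_aux_sum_filter {n m : ℕ} (hm : m ≤ n) (f : ℕ → ℝ) :
    ∑ i ∈ Finset.univ.filter (fun i : Fin n => (i : ℕ) < m), f i
      = ∑ i ∈ Finset.range m, f i := by
  rw [Finset.sum_filter]
  rw [Fin.sum_univ_eq_sum_range (fun j => if j < m then f j else 0)]
  rw [← Finset.sum_filter]
  congr 1
  ext i
  simp only [Finset.mem_filter, Finset.mem_range]
  omega

/-- Reversed reindexing of a sum. -/
lemma cusum_aux_sum_filter_rev {n m : ℕ} (hm : m ≤ n) (f : ℕ → ℝ) :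
    ∑ i ∈ Finset.univ.filter (fun i : Fin n => (i : ℕ) < m), f (n - 1 - (i : ℕ))
      = ∑ i ∈ Finset.Ico (n - m) n, f i := by
  rw [cusum_aux_sum_filter hm (fun j => f (n - 1 - j))]
  refine Finset.sum_bij' (fun i _ => n - 1 - i) (fun j _ => n - 1 - j) ?_ ?_ ?_ ?_ ?_
  · intro a ha
    simp only [Finset.mem_range] at ha
    simp only [Finset.mem_Ico]
    omega
  · intro b hb
    simp only [Finset.mem_Ico] at hb
    simp only [Finset.mem_range]
    omega
  · intro a ha
    simp only [Finset.mem_range] at ha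
    show n - 1 - (n - 1 - a) = a
    omega
  · intro b hb
    simp only [Finset.mem_Ico] at hb
    show n - 1 - (n - 1 - b) = b
    omega
  · intro a _
    rfl

/-- The limiting distribution of the CUSUM statistic is the law of the all-time
maximum of the random walk: for every `x`, `n ↦ P(W n ≤ x)` is nonincreasing
and converges to `P(sup_{k ≥ 0} S k ≤ x)`.  If moreover the increments are
integrable with negative mean, the all-time supremum is almost surely finite,
so `W n` converges in distribution to an almost surely finite random variable. -/
theorem cusum_limiting_distribution
    {Ω : Type*} [MeasurableSpace Ω] (μ : Measure Ω) [IsProbabilityMeasure μ]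
    (X : ℕ → Ω → ℝ)
    (hmeas : ∀ i, Measurable (X i))
    (hindep : iIndepFun X μ)
    (hident : ∀ i, μ.map (X i) = μ.map (X 0))
    (S : ℕ → Ω → ℝ)
    (hS : ∀ n ω, S n ω = ∑ i ∈ Finset.range n, X i ω)
    (W : ℕ → Ω → ℝ)
    (hW0 : ∀ ω, W 0 ω = 0)
    (hW : ∀ n ω, W (n + 1) ω = max 0 (W n ω + X n ω)) :
    (∀ x : ℝ,
      Antitone (fun n => μ {ω | W n ω ≤ x}) ∧
      Tendsto (fun n => μ {ω | W n ω ≤ x}) atTop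
        (nhds (μ {ω | ∀ k, S k ω ≤ x}))) ∧
    (Integrable (X 0) μ → (∫ ω, X 0 ω ∂μ) < 0 →
      ∀ᵐ ω ∂μ, BddAbove (Set.range fun k => S k ω)) := by
  -- measurability of partial sums
  have hSmeas : ∀ k, Measurable (S k) := by
    intro k
    have : S k = fun ω => ∑ i ∈ Finset.range k, X i ω := funext (hS k)
    rw [this]
    exact Finset.measurable_sum _ fun i _ => hmeas i
  -- CUSUM equals max of suffix sums (in the form of an iff)
  have hWiff : ∀ n x ω, W n ω ≤ x ↔
      ∀ m ≤ n, ∑ i ∈ Finset.Ico (n - m) n, X i ω ≤ x := by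
    intro n
    induction n with
    | zero =>
      intro x ω
      rw [hW0]
      constructor
      · intro h m hm
        simpa using h
      · intro h
        simpa using h 0 le_rfl
    | succ n ih =>
      intro x ω
      rw [hW n ω, max_le_iff]
      have h2 : W n ω + X n ω ≤ x ↔ W n ω ≤ x - X n ω := by
        constructor <;> intro h <;> linarith
      rw [h2, ih (x - X n ω) ω]
      constructor
      · rintro ⟨h0, h⟩ m hm
        match m, hm with
        | 0, _ => simpa using h0
        | (m' + 1), hm' =>
          have hm'' : m' ≤ n := by omega
          have := h m' hm''
          have hsum : ∑ i ∈ Finset.Ico (n + 1 - (m' + 1)) (n + 1), X i ω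
              = (∑ i ∈ Finset.Ico (n - m') n, X i ω) + X n ω := by
            have hle : n - m' ≤ n := Nat.sub_le _ _
            have : n + 1 - (m' + 1) = n - m' := by omega
            rw [this, Finset.sum_Ico_succ_top hle]
          rw [hsum]; linarith
      · intro h
        constructor
        · simpa using h 0 (by omega)
        · intro m hm
          have := h (m + 1) (by omega)
          have hsum : ∑ i ∈ Finset.Ico (n + 1 - (m + 1)) (n + 1), X i ω
              = (∑ i ∈ Finset.Ico (n - m) n, X i ω) + X n ω := by
            have hle : n - m ≤ n := Nat.sub_le _ _
            have heq : n + 1 - (m + 1) = n - m := by omega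
            rw [heq, Finset.sum_Ico_succ_top hle]
          rw [hsum] at this
          linarith
  -- key distributional identity
  have key : ∀ n x, μ {ω | W n ω ≤ x} = μ {ω | ∀ k ≤ n, S k ω ≤ x} := by
    intro n x
    set A : Set (Fin n → ℝ) :=
      {y | ∀ m ≤ n, ∑ i ∈ Finset.univ.filter (fun i : Fin n => (i : ℕ) < m), y i ≤ x}
      with hAdef
    have hA : MeasurableSet A := by
      have : A = ⋂ (m : ℕ) (_ : m ≤ n),
          {y : Fin n → ℝ |
            ∑ i ∈ Finset.univ.filter (fun i : Fin n => (i : ℕ) < m), y i ≤ x} := by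
        ext y; simp [hAdef]
      rw [this]
      exact MeasurableSet.iInter fun m => MeasurableSet.iInter fun _ =>
        measurableSet_le (Finset.measurable_sum _ fun i _ => measurable_pi_apply i)
          measurable_const
    set σ : Fin n → ℕ := fun i => n - 1 - (i : ℕ) with hσdef
    have hσinj : Function.Injective σ := by
      intro i j h
      have hi := i.isLt
      have hj := j.isLt
      simp only [hσdef] at h
      exact Fin.ext (by omega)
    have hvalinj : Function.Injective (fun i : Fin n => (i : ℕ)) := Fin.val_injective
    have E1 : {ω | W n ω ≤ x} = (fun ω (i : Fin n) => X (σ i) ω) ⁻¹' A := by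
      ext ω
      simp only [Set.mem_setOf_eq, Set.mem_preimage, hAdef]
      rw [hWiff n x ω]
      constructor
      · intro h m hm
        rw [hσdef]
        rw [cusum_aux_sum_filter_rev hm (fun j => X j ω)]
        exact h m hm
      · intro h m hm
        have := h m hm
        rw [hσdef] at this
        rwa [cusum_aux_sum_filter_rev hm (fun j => X j ω)] at this
    have E2 : {ω | ∀ k ≤ n, S k ω ≤ x} = (fun ω (i : Fin n) => X ((i : ℕ)) ω) ⁻¹' A := by
      ext ω
      simp only [Set.mem_setOf_eq, Set.mem_preimage, hAdef]
      constructor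
      · intro h m hm
        rw [cusum_aux_sum_filter hm (fun j => X j ω), ← hS m ω]
        exact h m hm
      · intro h k hk
        have := h k hk
        rw [cusum_aux_sum_filter hk (fun j => X j ω), ← hS k ω] at this
        exact this
    have hT1 : Measurable (fun ω (i : Fin n) => X (σ i) ω) :=
      measurable_pi_lambda _ fun i => hmeas (σ i)
    have hT2 : Measurable (fun ω (i : Fin n) => X ((i : ℕ)) ω) :=
      measurable_pi_lambda _ fun i => hmeas _
    rw [E1, E2, ← Measure.map_apply hT1 hA, ← Measure.map_apply hT2 hA,
      cusum_aux_map_tuple_eq_pi μ X hmeas hindep hident n σ hσinj,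
      cusum_aux_map_tuple_eq_pi μ X hmeas hindep hident n (fun i => (i : ℕ)) hvalinj]
  constructor
  · intro x
    have hDanti : Antitone (fun n => {ω | ∀ k ≤ n, S k ω ≤ x}) := by
      intro a b hab ω hω k hk
      exact hω k (hk.trans hab)
    constructor
    · intro a b hab
      simp only
      rw [key a x, key b x]
      exact measure_mono (hDanti hab)
    · have heq : (fun n => μ {ω | W n ω ≤ x})
          = μ ∘ (fun n => {ω | ∀ k ≤ n, S k ω ≤ x}) := by
        funext n; exact key n x
      rw [heq]
      have hiInter : (⋂ n, {ω | ∀ k ≤ n, S k ω ≤ x}) = {ω | ∀ k, S k ω ≤ x} := by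
        ext ω
        simp only [Set.mem_iInter, Set.mem_setOf_eq]
        exact ⟨fun h k => h k k le_rfl, fun h n k _ => h k⟩
      rw [← hiInter]
      refine tendsto_measure_iInter_atTop (fun n => ?_) hDanti ⟨0, measure_ne_top _ _⟩
      have : {ω | ∀ k ≤ n, S k ω ≤ x}
          = ⋂ (k : ℕ) (_ : k ≤ n), {ω | S k ω ≤ x} := by
        ext ω; simp
      rw [this]
      exact (MeasurableSet.iInter fun k => MeasurableSet.iInter fun _ =>
        measurableSet_le (hSmeas k) measurable_const).nullMeasurableSet
  · intro hint hmean
    have hpair : Pairwise (Function.onFun (IndepFun · · μ) X) := fun i j hij => hindep.indepFun hij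
    have hid : ∀ i, IdentDistrib (X i) (X 0) μ μ :=
      fun i => ⟨(hmeas i).aemeasurable, (hmeas 0).aemeasurable, hident i⟩
    filter_upwards [strong_law_ae_real X hint hpair hid] with ω hω
    have hlt : ∀ᶠ n : ℕ in atTop, (∑ i ∈ Finset.range n, X i ω) / n < 0 :=
      hω.eventually_lt_const hmean
    obtain ⟨N, hN⟩ := eventually_atTop.mp hlt
    set N' : ℕ := max N 1 with hN'def
    have hnonempty : (Finset.range (N' + 1)).Nonempty := ⟨0, by simp⟩
    refine ⟨max 0 ((Finset.range (N' + 1)).sup' hnonempty (fun k => S k ω)), ?_⟩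
    rintro y ⟨k, rfl⟩
    rcases lt_or_ge k (N' + 1) with hk | hk
    · exact le_max_of_le_right
        (Finset.le_sup' (fun k => S k ω) (Finset.mem_range.mpr hk))
    · have hkN : N ≤ k := by omega
      have hk1 : 1 ≤ k := by omega
      have hdiv := hN k hkN
      have hkpos : (0 : ℝ) < (k : ℝ) := by exact_mod_cast hk1
      have hSk : S k ω < 0 := by
        rw [hS k ω]
        by_contra hcon
        push_neg at hcon
        have : 0 ≤ (∑ i ∈ Finset.range k, X i ω) / k := div_nonneg hcon hkpos.le
        linarith
      exact le_max_of_le_left hSk.le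
end

section
/- Let m₁ > 0 and υ₊ > 0, and let ε₁, ε₂ : [0,∞) → ℝ be continuous functions with ε₁(θ) → 0 and ε₂(θ) → 0 as θ → ∞, and such that 1/m₁ + ε₁(θ) > 0 and υ₊ + ε₂(θ) > 0 for all θ ≥ 0. For κ ≥ 1 define J̄(θ, κ) = θ (1/m₁ + ε₁(θ)) + κ exp(−θ (υ₊ + ε₂(θ))) and J*(κ) = inf_{θ ≥ 0} J̄(θ, κ). Then for each κ the infimum is attained, J*(κ) = (1/(m₁ υ₊)) log κ + o(log κ) as κ → ∞, and any family (θ*(κ)) of minimizers satisfies θ*(κ) = (1/υ₊) log κ + o(log κ) as κ → ∞. -/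
open Real Filter Set

set_option maxHeartbeats 4000000 in
private lemma ev_log_lt_exp (a D : ℝ) (ha : 0 < a) :
    ∀ᶠ κ : ℝ in atTop, D * Real.log κ < Real.exp (a * Real.log κ) := by
  filter_upwards [Real.tendsto_log_atTop.eventually_gt_atTop
    (max (4 * (|D| + 1) / a ^ 2) 0)] with κ hκ
  set y := Real.log κ with hy
  have hy0 : 0 < y := (le_max_right _ _).trans_lt hκ
  have hy1 : 4 * (|D| + 1) / a ^ 2 < y := (le_max_left _ _).trans_lt hκ
  have ha2 : (0:ℝ) < a ^ 2 := by positivity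
  rw [div_lt_iff₀ ha2] at hy1
  have hexp : a * y / 2 + 1 ≤ Real.exp (a * y / 2) := Real.add_one_le_exp _
  have hsq : Real.exp (a * y) = Real.exp (a * y / 2) ^ 2 := by
    rw [sq, ← Real.exp_add]; ring_nf
  have hD : D ≤ |D| := le_abs_self D
  have h0 : (0:ℝ) ≤ a * y / 2 + 1 := by positivity
  have hsq2 : (a*y/2+1)^2 ≤ Real.exp (a*y/2)^2 := pow_le_pow_left₀ h0 hexp 2
  rw [hsq]
  nlinarith [mul_lt_mul_of_pos_right hy1 hy0, mul_le_mul_of_nonneg_right hD hy0.le, hy0]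

set_option maxHeartbeats 4000000 in
/-- Asymptotics of the optimal CUSUM threshold and cost.  Suppose
`J̄(θ, κ) = θ(1/m₁ + ε₁(θ)) + κ exp(−θ(υ₊ + ε₂(θ)))` where `ε₁, ε₂` are
continuous and vanish at infinity, with `1/m₁ + ε₁(θ) > 0` and
`υ₊ + ε₂(θ) > 0` on `[0,∞)`.  Then for each `κ ≥ 1` the infimum of
`J̄(·, κ)` over `θ ≥ 0` is attained, the optimal cost satisfies
`J*(κ) = (1/(m₁ υ₊)) log κ + o(log κ)`, and any family of minimizers satisfies
`θ*(κ) = (1/υ₊) log κ + o(log κ)` as `κ → ∞`. -/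
theorem cusum_cost_asymptotics
    (m₁ υp : ℝ) (hm₁ : 0 < m₁) (hυp : 0 < υp)
    (ε₁ ε₂ : ℝ → ℝ) (hε₁cont : Continuous ε₁) (hε₂cont : Continuous ε₂)
    (hε₁lim : Tendsto ε₁ atTop (nhds 0)) (hε₂lim : Tendsto ε₂ atTop (nhds 0))
    (hpos₁ : ∀ θ : ℝ, 0 ≤ θ → 0 < 1 / m₁ + ε₁ θ)
    (hpos₂ : ∀ θ : ℝ, 0 ≤ θ → 0 < υp + ε₂ θ)
    (J : ℝ → ℝ → ℝ)
    (hJ : ∀ θ κ, J θ κ = θ * (1 / m₁ + ε₁ θ) + κ * Real.exp (-θ * (υp + ε₂ θ)))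
    (Jstar : ℝ → ℝ)
    (hJstar : ∀ κ, Jstar κ = sInf ((fun θ => J θ κ) '' Ici 0)) :
    (∀ κ : ℝ, 1 ≤ κ → ∃ θ₀ ∈ Ici (0 : ℝ), ∀ θ ∈ Ici (0 : ℝ), J θ₀ κ ≤ J θ κ) ∧
    Tendsto (fun κ => Jstar κ / Real.log κ) atTop (nhds (1 / (m₁ * υp))) ∧
    (∀ θstar : ℝ → ℝ,
      (∀ κ : ℝ, 1 ≤ κ →
        θstar κ ∈ Ici (0 : ℝ) ∧ ∀ θ ∈ Ici (0 : ℝ), J (θstar κ) κ ≤ J θ κ) →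
      Tendsto (fun κ => θstar κ / Real.log κ) atTop (nhds (1 / υp))) := by
  have hc₁ : 0 < 1 / m₁ := by positivity
  have hc : 0 < 1 / (m₁ * υp) := by positivity
  have hJnn : ∀ κ : ℝ, 0 ≤ κ → ∀ θ : ℝ, 0 ≤ θ → 0 ≤ J θ κ := by
    intro κ hκ θ hθ
    rw [hJ]
    have h1 := hpos₁ θ hθ
    have h2 := (Real.exp_pos (-θ * (υp + ε₂ θ))).le
    nlinarith
  have hbdd : ∀ κ : ℝ, 0 ≤ κ → BddBelow ((fun θ => J θ κ) '' Ici 0) := by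
    intro κ hκ
    exact ⟨0, by rintro y ⟨θ, hθ, rfl⟩; exact hJnn κ hκ θ hθ⟩
  have hne : ∀ κ : ℝ, ((fun θ => J θ κ) '' Ici 0).Nonempty :=
    fun κ => ⟨J 0 κ, 0, self_mem_Ici, rfl⟩
  have hJstar_le : ∀ κ : ℝ, 0 ≤ κ → ∀ θ : ℝ, 0 ≤ θ → Jstar κ ≤ J θ κ := by
    intro κ hκ θ hθ
    rw [hJstar]
    exact csInf_le (hbdd κ hκ) ⟨θ, hθ, rfl⟩
  have hle_Jstar : ∀ κ b : ℝ, (∀ θ : ℝ, 0 ≤ θ → b ≤ J θ κ) → b ≤ Jstar κ := by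
    intro κ b h
    rw [hJstar]
    exact le_csInf (hne κ) (by rintro y ⟨θ, hθ, rfl⟩; exact h θ hθ)
  have hJcont : ∀ κ : ℝ, Continuous fun θ => J θ κ := by
    intro κ
    have heq : (fun θ => J θ κ)
        = fun θ => θ * (1 / m₁ + ε₁ θ) + κ * Real.exp (-θ * (υp + ε₂ θ)) :=
      funext fun θ => hJ θ κ
    rw [heq]
    exact (continuous_id.mul (continuous_const.add hε₁cont)).add
      (continuous_const.mul (Real.continuous_exp.comp
        (continuous_id.neg.mul (continuous_const.add hε₂cont))))
  -- Part 1: existence of minimizers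
  have hmin : ∀ κ : ℝ, 1 ≤ κ → ∃ θ₀ ∈ Ici (0 : ℝ), ∀ θ ∈ Ici (0 : ℝ), J θ₀ κ ≤ J θ κ := by
    intro κ hκ
    have hκ0 : (0:ℝ) ≤ κ := by linarith
    have h1 : ∀ᶠ θ : ℝ in atTop, 1 / (2 * m₁) * θ ≤ J θ κ := by
      have hev := hε₁lim.eventually (eventually_ge_nhds
        (show -(1 / (2 * m₁)) < 0 by
          have : (0:ℝ) < 1 / (2 * m₁) := by positivity
          linarith))
      filter_upwards [hev, eventually_ge_atTop (0:ℝ)] with θ hθ1 hθ2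
      rw [hJ]
      have h2 : 0 ≤ κ * Real.exp (-θ * (υp + ε₂ θ)) :=
        mul_nonneg hκ0 (Real.exp_pos _).le
      have h3 : 1 / (2 * m₁) ≤ 1 / m₁ + ε₁ θ := by
        have : 1 / m₁ - 1 / (2 * m₁) = 1 / (2 * m₁) := by field_simp; ring
        linarith
      nlinarith [mul_le_mul_of_nonneg_left h3 hθ2]
    have hgrow : Tendsto (fun θ => J θ κ) atTop atTop :=
      tendsto_atTop_mono' atTop h1
        (Tendsto.const_mul_atTop (by positivity) tendsto_id)
    obtain ⟨R, hR⟩ := eventually_atTop.mp (hgrow.eventually_ge_atTop (J 0 κ))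
    have hneR : (Icc (0:ℝ) (max R 0)).Nonempty := ⟨0, le_refl 0, le_max_right R 0⟩
    obtain ⟨θ₀, hθ₀mem, hθ₀min'⟩ :=
      isCompact_Icc.exists_isMinOn hneR ((hJcont κ).continuousOn)
    have hθ₀min := isMinOn_iff.mp hθ₀min'
    refine ⟨θ₀, hθ₀mem.1, ?_⟩
    intro θ hθ
    by_cases hcase : θ ≤ max R 0
    · exact hθ₀min θ ⟨hθ, hcase⟩
    · push_neg at hcase
      calc J θ₀ κ ≤ J 0 κ := hθ₀min 0 ⟨le_refl 0, le_max_right R 0⟩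
        _ ≤ J θ κ := hR θ (le_trans (le_max_left R 0) hcase.le)
  -- lower core estimate
  have lower_core : ∀ δ : ℝ, 0 < δ → δ < 1 → ∀ D : ℝ, ∀ᶠ κ : ℝ in atTop,
      ∀ θ : ℝ, 0 ≤ θ → θ ≤ (1 - δ) / ((1 + δ) * υp) * Real.log κ →
      D * Real.log κ < κ * Real.exp (-θ * (υp + ε₂ θ)) := by
    intro δ hδ hδ1 D
    obtain ⟨M₀, hM₀⟩ := eventually_atTop.mp
      (hε₂lim.eventually (eventually_le_nhds (show (0:ℝ) < δ * υp by positivity)))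
    obtain ⟨M, hMdef⟩ : ∃ M : ℝ, M = max M₀ 0 := ⟨_, rfl⟩
    have hM0 : (0:ℝ) ≤ M := by rw [hMdef]; exact le_max_right _ _
    obtain ⟨x, hx, hxmax'⟩ := isCompact_Icc.exists_isMaxOn
      (⟨0, le_refl 0, hM0⟩ : (Icc (0:ℝ) M).Nonempty)
      ((continuous_const.add hε₂cont).continuousOn)
    have hxmax := isMaxOn_iff.mp hxmax'
    obtain ⟨G, hGdef⟩ : ∃ G : ℝ, G = max (υp + ε₂ x) 0 := ⟨_, rfl⟩
    have hG0 : (0:ℝ) ≤ G := by rw [hGdef]; exact le_max_right _ _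
    have hGbound : ∀ θ ∈ Icc (0:ℝ) M, υp + ε₂ θ ≤ G := by
      intro θ hθ
      rw [hGdef]
      exact le_trans (hxmax θ hθ) (le_max_left _ _)
    filter_upwards [ev_log_lt_exp δ D hδ, ev_log_lt_exp 1 (D * Real.exp (M * G)) one_pos,
      eventually_gt_atTop (0:ℝ), Real.tendsto_log_atTop.eventually_ge_atTop 0]
      with κ e1 e2 hκpos hlogκ
    intro θ hθ0 hθle
    have hgθ : 0 < υp + ε₂ θ := hpos₂ θ hθ0
    have hexpbound : θ * (υp + ε₂ θ) ≤ max (M * G) ((1 - δ) * Real.log κ) := by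
      rcases le_or_gt θ M with h | h
      · exact le_trans (mul_le_mul h (hGbound θ ⟨hθ0, h⟩) hgθ.le hM0) (le_max_left _ _)
      · have hM₀M : M₀ ≤ M := by rw [hMdef]; exact le_max_left _ _
        have h2 : ε₂ θ ≤ δ * υp := hM₀ θ (le_trans hM₀M h.le)
        have hX : (0:ℝ) < (1 + δ) * υp := by positivity
        have h3 : θ * (υp + ε₂ θ) ≤ θ * ((1 + δ) * υp) :=
          mul_le_mul_of_nonneg_left (by nlinarith) hθ0
        have h4 : θ * ((1 + δ) * υp) ≤ (1 - δ) * Real.log κ := by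
          calc θ * ((1 + δ) * υp)
              ≤ (1 - δ) / ((1 + δ) * υp) * Real.log κ * ((1 + δ) * υp) :=
                mul_le_mul_of_nonneg_right hθle hX.le
            _ = (1 - δ) * Real.log κ := by field_simp
        exact le_trans h3 (le_trans h4 (le_max_right _ _))
    have hκexp : κ * Real.exp (-θ * (υp + ε₂ θ))
        = Real.exp (Real.log κ - θ * (υp + ε₂ θ)) := by
      rw [Real.exp_sub, Real.exp_log hκpos, neg_mul, Real.exp_neg, div_eq_mul_inv]
    rw [hκexp]
    have hmono : Real.exp (Real.log κ - max (M * G) ((1 - δ) * Real.log κ))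
        ≤ Real.exp (Real.log κ - θ * (υp + ε₂ θ)) :=
      Real.exp_le_exp.mpr (by linarith [hexpbound])
    rcases max_choice (M * G) ((1 - δ) * Real.log κ) with h | h
    · rw [h] at hmono
      have hlt : D * Real.log κ < Real.exp (Real.log κ - M * G) := by
        rw [one_mul] at e2
        rw [Real.exp_sub, lt_div_iff₀ (Real.exp_pos _)]
        calc D * Real.log κ * Real.exp (M * G)
            = D * Real.exp (M * G) * Real.log κ := by ring
          _ < Real.exp (Real.log κ) := e2
      exact hlt.trans_le hmono
    · rw [h] at hmono
      have heq : Real.log κ - (1 - δ) * Real.log κ = δ * Real.log κ := by ring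
      rw [heq] at hmono
      exact e1.trans_le hmono
  -- upper core estimate
  have upper_core : ∀ a η : ℝ, 1 / υp < a → 0 < η → ∀ᶠ κ : ℝ in atTop,
      Jstar κ ≤ a * (1 / m₁ + η) * Real.log κ + 1 := by
    intro a η ha hη
    have ha0 : 0 < a := lt_trans (by positivity) ha
    have h1a : 1 < a * υp := by rw [div_lt_iff₀ hυp] at ha; linarith
    have hε₀ : 0 < υp - 1 / a := by
      rw [sub_pos, div_lt_iff₀ ha0]; nlinarith
    have hθκ : Tendsto (fun κ : ℝ => a * Real.log κ) atTop atTop :=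
      Real.tendsto_log_atTop.const_mul_atTop ha0
    have hev₁ : ∀ᶠ κ : ℝ in atTop, ε₁ (a * Real.log κ) ≤ η := by
      have := (hε₁lim.comp hθκ).eventually (eventually_le_nhds hη)
      simpa [Function.comp] using this
    have hev₂ : ∀ᶠ κ : ℝ in atTop, -(υp - 1 / a) ≤ ε₂ (a * Real.log κ) := by
      have := (hε₂lim.comp hθκ).eventually (eventually_ge_nhds (by linarith :
        -(υp - 1 / a) < 0))
      simpa [Function.comp] using this
    filter_upwards [hev₁, hev₂, eventually_ge_atTop (1:ℝ),
      Real.tendsto_log_atTop.eventually_ge_atTop 0] with κ h1 h2 hκ1 hlog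
    have hθ0 : 0 ≤ a * Real.log κ := mul_nonneg ha0.le hlog
    have hκ0 : (0:ℝ) < κ := by linarith
    have hstep : J (a * Real.log κ) κ ≤ a * (1 / m₁ + η) * Real.log κ + 1 := by
      rw [hJ]
      have hA : a * Real.log κ * (1 / m₁ + ε₁ (a * Real.log κ))
          ≤ a * (1 / m₁ + η) * Real.log κ := by
        calc a * Real.log κ * (1 / m₁ + ε₁ (a * Real.log κ))
            ≤ a * Real.log κ * (1 / m₁ + η) :=
              mul_le_mul_of_nonneg_left (by linarith) hθ0
          _ = a * (1 / m₁ + η) * Real.log κ := by ring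
      have hB : κ * Real.exp (-(a * Real.log κ) * (υp + ε₂ (a * Real.log κ))) ≤ 1 := by
        have hge : 1 / a ≤ υp + ε₂ (a * Real.log κ) := by linarith
        have hlogeq : Real.log κ = a * Real.log κ * (1 / a) := by field_simp
        have hexple : -(a * Real.log κ) * (υp + ε₂ (a * Real.log κ)) ≤ -Real.log κ := by
          have := mul_le_mul_of_nonneg_left hge hθ0
          nlinarith
        calc κ * Real.exp (-(a * Real.log κ) * (υp + ε₂ (a * Real.log κ)))
            ≤ κ * Real.exp (-Real.log κ) :=
              mul_le_mul_of_nonneg_left (Real.exp_le_exp.mpr hexple) hκ0.le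
          _ = 1 := by rw [Real.exp_neg, Real.exp_log hκ0]; field_simp
      linarith
    exact le_trans (hJstar_le κ (by linarith) _ hθ0) hstep
  -- Part 2
  have part2 : Tendsto (fun κ => Jstar κ / Real.log κ) atTop (nhds (1 / (m₁ * υp))) := by
    rw [tendsto_order]
    constructor
    · intro b hb
      obtain ⟨b', hb'def⟩ : ∃ x : ℝ, x = (b + 1 / (m₁ * υp)) / 2 := ⟨_, rfl⟩
      have hbb' : b < b' := by rw [hb'def]; linarith
      have hb'c : b' < 1 / (m₁ * υp) := by rw [hb'def]; linarith
      obtain ⟨r, hrdef⟩ : ∃ x : ℝ, x = max (b' * (m₁ * υp)) 0 := ⟨_, rfl⟩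
      have hr0 : (0:ℝ) ≤ r := by rw [hrdef]; exact le_max_right _ _
      have hr1 : r < 1 := by
        rw [hrdef]
        refine max_lt ?_ one_pos
        rw [← lt_div_iff₀ (by positivity : (0:ℝ) < m₁ * υp)]
        simpa using hb'c
      obtain ⟨δ, hδdef⟩ : ∃ x : ℝ, x = (1 - r) / 3 := ⟨_, rfl⟩
      have hδ0 : 0 < δ := by rw [hδdef]; linarith
      have hδ1 : δ < 1 := by rw [hδdef]; linarith
      have hrδ : r = 1 - 3 * δ := by rw [hδdef]; ring
      obtain ⟨M₁, hM₁⟩ := eventually_atTop.mp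
        (hε₁lim.eventually (eventually_ge_nhds (show -(δ / m₁) < 0 by
          have : (0:ℝ) < δ / m₁ := div_pos hδ0 hm₁
          linarith)))
      have hcoef : (0:ℝ) < (1 - δ) / ((1 + δ) * υp) :=
        div_pos (by linarith) (mul_pos (by linarith) hυp)
      filter_upwards [lower_core δ hδ0 hδ1 b',
        Real.tendsto_log_atTop.eventually_gt_atTop 0,
        (Real.tendsto_log_atTop.const_mul_atTop hcoef).eventually_ge_atTop M₁,
        eventually_ge_atTop (0:ℝ)] with κ hcore hlog hT hκ0
      have hJb : ∀ θ : ℝ, 0 ≤ θ → b' * Real.log κ ≤ J θ κ := by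
        intro θ hθ0
        rcases le_or_gt θ ((1 - δ) / ((1 + δ) * υp) * Real.log κ) with hcase | hcase
        · have hlt := hcore θ hθ0 hcase
          rw [hJ]
          have hf : 0 ≤ θ * (1 / m₁ + ε₁ θ) := mul_nonneg hθ0 (hpos₁ θ hθ0).le
          linarith
        · rw [hJ]
          have hMθ : M₁ ≤ θ := le_trans hT hcase.le
          have hε : -(δ / m₁) ≤ ε₁ θ := hM₁ θ hMθ
          have h1 : (1 - δ) / m₁ ≤ 1 / m₁ + ε₁ θ := by
            have : (1 - δ) / m₁ = 1 / m₁ - δ / m₁ := by ring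
            linarith
          have h2 : (1 - δ) / ((1 + δ) * υp) * Real.log κ * ((1 - δ) / m₁)
              ≤ θ * (1 / m₁ + ε₁ θ) :=
            mul_le_mul hcase.le h1 (le_of_lt (div_pos (by linarith) hm₁)) hθ0
          have hcoefge : b' ≤ (1 - δ) / ((1 + δ) * υp) * ((1 - δ) / m₁) := by
            have hb'r : b' ≤ r * (1 / (m₁ * υp)) := by
              have hle : b' * (m₁ * υp) ≤ r := by rw [hrdef]; exact le_max_left _ _
              calc b' = b' * (m₁ * υp) * (1 / (m₁ * υp)) := by field_simp
                _ ≤ r * (1 / (m₁ * υp)) :=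
                  mul_le_mul_of_nonneg_right hle (by positivity)
            refine hb'r.trans ?_
            rw [show r * (1 / (m₁ * υp)) = r / (m₁ * υp) by ring, div_mul_div_comm,
              div_le_div_iff₀ (by positivity)
                (mul_pos (mul_pos (by linarith : (0:ℝ) < 1 + δ) hυp) hm₁), hrδ]
            nlinarith [mul_pos (mul_pos hm₁ hυp) (mul_pos hδ0 hδ0)]
          have h3 : b' * Real.log κ
              ≤ (1 - δ) / ((1 + δ) * υp) * Real.log κ * ((1 - δ) / m₁) := by
            calc b' * Real.log κ
                ≤ (1 - δ) / ((1 + δ) * υp) * ((1 - δ) / m₁) * Real.log κ :=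
                  mul_le_mul_of_nonneg_right hcoefge hlog.le
              _ = (1 - δ) / ((1 + δ) * υp) * Real.log κ * ((1 - δ) / m₁) := by ring
          have hexpnn : 0 ≤ κ * Real.exp (-θ * (υp + ε₂ θ)) :=
            mul_nonneg hκ0 (Real.exp_pos _).le
          linarith
      have hJsge : b' * Real.log κ ≤ Jstar κ := hle_Jstar κ _ hJb
      rw [lt_div_iff₀ hlog]
      calc b * Real.log κ < b' * Real.log κ := mul_lt_mul_of_pos_right hbb' hlog
        _ ≤ Jstar κ := hJsge
    · intro b hb
      obtain ⟨b', hb'def⟩ : ∃ x : ℝ, x = (b + 1 / (m₁ * υp)) / 2 := ⟨_, rfl⟩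
      have h1 : 1 / (m₁ * υp) < b' := by rw [hb'def]; linarith
      have h2 : b' < b := by rw [hb'def]; linarith
      have hb'0 : 0 < b' := lt_trans hc h1
      have hbυ : 1 / m₁ < b' * υp := by
        rw [← div_lt_iff₀ hυp]
        calc 1 / m₁ / υp = 1 / (m₁ * υp) := by field_simp
          _ < b' := h1
      obtain ⟨η, hηdef⟩ : ∃ x : ℝ, x = (b' * υp - 1 / m₁) / 2 := ⟨_, rfl⟩
      have hη0 : 0 < η := by rw [hηdef]; linarith
      have hcη : 0 < 1 / m₁ + η := by linarith
      obtain ⟨a, hadef⟩ : ∃ x : ℝ, x = b' / (1 / m₁ + η) := ⟨_, rfl⟩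
      have ha0 : 0 < a := by rw [hadef]; exact div_pos hb'0 hcη
      have haυ : 1 / υp < a := by
        rw [hadef, div_lt_div_iff₀ hυp hcη, hηdef]
        linarith
      have haeq : a * (1 / m₁ + η) = b' := by
        rw [hadef]
        field_simp
      filter_upwards [upper_core a η haυ hη0,
        Real.tendsto_log_atTop.eventually_gt_atTop 0,
        (Real.tendsto_log_atTop.const_mul_atTop
          (show (0:ℝ) < b - b' by linarith)).eventually_gt_atTop 1]
        with κ hup hlog hbb
      rw [div_lt_iff₀ hlog]
      rw [haeq] at hup
      nlinarith
  refine ⟨hmin, part2, ?_⟩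
  -- Part 3
  intro θstar hθstar
  have hJeq : ∀ᶠ κ : ℝ in atTop, Jstar κ = J (θstar κ) κ := by
    filter_upwards [eventually_ge_atTop (1:ℝ)] with κ hκ
    obtain ⟨hmem, hminθ⟩ := hθstar κ hκ
    exact le_antisymm (hJstar_le κ (by linarith) _ hmem)
      (hle_Jstar κ _ (fun θ hθ => hminθ θ hθ))
  rw [tendsto_order]
  constructor
  · intro b hb
    obtain ⟨r, hrdef⟩ : ∃ x : ℝ, x = max (b * υp) 0 := ⟨_, rfl⟩
    have hr0 : (0:ℝ) ≤ r := by rw [hrdef]; exact le_max_right _ _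
    have hr1 : r < 1 := by
      rw [hrdef]
      refine max_lt ?_ one_pos
      rw [← lt_div_iff₀ hυp]
      simpa using hb
    obtain ⟨ε, hεdef⟩ : ∃ x : ℝ, x = (1 - r) / 2 := ⟨_, rfl⟩
    have hε0 : 0 < ε := by rw [hεdef]; linarith
    have hε1 : ε < 1 := by rw [hεdef]; linarith
    have hbε : b * υp < 1 - ε := by
      have hrb : b * υp ≤ r := by rw [hrdef]; exact le_max_left _ _
      have h1 : 1 - ε = (1 + r) / 2 := by rw [hεdef]; ring
      rw [h1]; linarith
    obtain ⟨δ, hδdef⟩ : ∃ x : ℝ, x = ε / (2 - ε) := ⟨_, rfl⟩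
    have h2ε : 0 < 2 - ε := by linarith
    have hδ0 : 0 < δ := by rw [hδdef]; exact div_pos hε0 h2ε
    have hδ1 : δ < 1 := by rw [hδdef, div_lt_one h2ε]; linarith
    have hδeq : (1 - δ) / ((1 + δ) * υp) = (1 - ε) / υp := by
      have h1pδ : (0:ℝ) < 1 + δ := by linarith
      rw [div_eq_div_iff (mul_pos h1pδ hυp).ne' hυp.ne', hδdef]
      field_simp [h2ε.ne']
      ring
    have hev2 := part2.eventually (eventually_lt_nhds
      (show 1 / (m₁ * υp) < 1 / (m₁ * υp) + 1 by linarith))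
    filter_upwards [hJeq, lower_core δ hδ0 hδ1 (1 / (m₁ * υp) + 1), hev2,
      Real.tendsto_log_atTop.eventually_gt_atTop 0, eventually_ge_atTop (1:ℝ)]
      with κ hJe hcore hJs hlog hκ1
    obtain ⟨hmem, _⟩ := hθstar κ hκ1
    by_contra hcon
    push_neg at hcon
    have hθle : θstar κ ≤ (1 - δ) / ((1 + δ) * υp) * Real.log κ := by
      rw [hδeq]
      have ht1 : θstar κ ≤ b * Real.log κ := (div_le_iff₀ hlog).mp hcon
      have ht2 : b ≤ (1 - ε) / υp := by rw [le_div_iff₀ hυp]; linarith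
      calc θstar κ ≤ b * Real.log κ := ht1
        _ ≤ (1 - ε) / υp * Real.log κ := mul_le_mul_of_nonneg_right ht2 hlog.le
    have hbig := hcore (θstar κ) hmem hθle
    have hJge : κ * Real.exp (-(θstar κ) * (υp + ε₂ (θstar κ))) ≤ J (θstar κ) κ := by
      rw [hJ]
      have := mul_nonneg (show (0:ℝ) ≤ θstar κ from hmem) (hpos₁ _ hmem).le
      linarith
    have hJslt : Jstar κ < (1 / (m₁ * υp) + 1) * Real.log κ := (div_lt_iff₀ hlog).mp hJs
    rw [hJe] at hJslt
    linarith
  · intro b hb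
    have hb0 : 0 < b := lt_trans (by positivity) hb
    have hs : 1 < b * υp := (div_lt_iff₀ hυp).mp hb
    obtain ⟨s, hsdef⟩ : ∃ x : ℝ, x = b * υp := ⟨_, rfl⟩
    have hs1 : 1 < s := by rw [hsdef]; exact hs
    have hs0 : 0 < s := by linarith
    obtain ⟨δ, hδdef⟩ : ∃ x : ℝ, x = (s - 1) / (2 * s) := ⟨_, rfl⟩
    have hδ0 : 0 < δ := by rw [hδdef]; exact div_pos (by linarith) (by linarith)
    have hδ1 : δ < 1 := by rw [hδdef, div_lt_one (by linarith)]; linarith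
    obtain ⟨εc, hεcdef⟩ : ∃ x : ℝ, x = 1 / m₁ * (s - 1) / (4 * υp) := ⟨_, rfl⟩
    have hεc0 : 0 < εc := by
      rw [hεcdef]
      exact div_pos (mul_pos hc₁ (by linarith)) (by positivity)
    have hkey : 1 / (m₁ * υp) + εc < b * ((1 - δ) * (1 / m₁)) := by
      have hdiff : b * ((1 - δ) * (1 / m₁)) - (1 / (m₁ * υp) + εc)
          = (s - 1) / (4 * (m₁ * υp)) := by
        rw [hδdef, hεcdef, hsdef]
        have hbυ0 : b * υp ≠ 0 := by
          rw [← hsdef]; exact hs0.ne'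
        field_simp [hm₁.ne', hυp.ne']
        ring
      have hpos : 0 < (s - 1) / (4 * (m₁ * υp)) :=
        div_pos (by linarith) (by positivity)
      linarith
    obtain ⟨M₁, hM₁⟩ := eventually_atTop.mp
      (hε₁lim.eventually (eventually_ge_nhds
        (show -(δ * (1 / m₁)) < 0 by
          have : (0:ℝ) < δ * (1 / m₁) := mul_pos hδ0 hc₁
          linarith)))
    have hev2 := part2.eventually (eventually_lt_nhds
      (show 1 / (m₁ * υp) < 1 / (m₁ * υp) + εc by linarith))
    filter_upwards [hJeq, hev2, Real.tendsto_log_atTop.eventually_gt_atTop 0,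
      (Real.tendsto_log_atTop.const_mul_atTop hb0).eventually_gt_atTop M₁,
      eventually_ge_atTop (1:ℝ)] with κ hJe hJs hlog hM₁b hκ1
    obtain ⟨hmem, _⟩ := hθstar κ hκ1
    rw [div_lt_iff₀ hlog]
    rcases lt_or_ge (θstar κ) M₁ with hcase | hcase
    · exact hcase.trans hM₁b
    · have hεθ : -(δ * (1 / m₁)) ≤ ε₁ (θstar κ) := hM₁ _ hcase
      have hmem' : (0:ℝ) ≤ θstar κ := hmem
      have hA : θstar κ * ((1 - δ) * (1 / m₁)) ≤ J (θstar κ) κ := by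
        rw [hJ]
        have hexpnn : 0 ≤ κ * Real.exp (-(θstar κ) * (υp + ε₂ (θstar κ))) :=
          mul_nonneg (by linarith) (Real.exp_pos _).le
        have hfac : (1 - δ) * (1 / m₁) ≤ 1 / m₁ + ε₁ (θstar κ) := by nlinarith
        nlinarith [mul_le_mul_of_nonneg_left hfac hmem']
      have hB : J (θstar κ) κ < (1 / (m₁ * υp) + εc) * Real.log κ := by
        rw [← hJe]; exact (div_lt_iff₀ hlog).mp hJs
      have hC : (1 / (m₁ * υp) + εc) * Real.log κ
          < b * ((1 - δ) * (1 / m₁)) * Real.log κ :=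
        mul_lt_mul_of_pos_right hkey hlog
      have hpos : 0 < (1 - δ) * (1 / m₁) := mul_pos (by linarith) hc₁
      have hD : θstar κ * ((1 - δ) * (1 / m₁)) < b * Real.log κ * ((1 - δ) * (1 / m₁)) := by
        have hring : b * ((1 - δ) * (1 / m₁)) * Real.log κ
            = b * Real.log κ * ((1 - δ) * (1 / m₁)) := by ring
        rw [hring] at hC
        linarith
      exact lt_of_mul_lt_mul_right hD hpos.le
end

section
/- Let Q be an m × m real matrix with nonnegative entries and all row sums at most 1 (a substochastic matrix), let ν ∈ ℝ^m be a probability vector (nonnegative entries summing to 1), and let 𝟙 ∈ ℝ^m be the all-ones vector. Define t_n = νᵀ Qⁿ 𝟙 for n ≥ 0. Assume t_n > 0 for every n, and t_n → 0 as n → ∞. Then there exists ρ ∈ (0, ∞) such that lim_{n → ∞} (1/n) log t_n = −ρ. -/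
open Filter Matrix Finset

section aux
variable {m : ℕ} (Q : Matrix (Fin m) (Fin m) ℝ) (hQnn : ∀ i j, 0 ≤ Q i j)
include hQnn

lemma pow_entry_nonneg (n : ℕ) (i j : Fin m) : 0 ≤ (Q ^ n) i j := by
  induction n generalizing i j with
  | zero => simp [Matrix.one_apply]; positivity
  | succ n ih =>
    rw [pow_succ, Matrix.mul_apply]
    exact Finset.sum_nonneg fun k _ => mul_nonneg (ih i k) (hQnn k j)

lemma u_nonneg (n : ℕ) (j : Fin m) : 0 ≤ (Q ^ n).mulVec (fun _ => 1) j := by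
  unfold Matrix.mulVec dotProduct
  exact Finset.sum_nonneg fun k _ => by
    simpa using pow_entry_nonneg Q hQnn n j k

lemma u_le_one (hQrow : ∀ i, ∑ j, Q i j ≤ 1) (n : ℕ) (j : Fin m) :
    (Q ^ n).mulVec (fun _ => 1) j ≤ 1 := by
  induction n generalizing j with
  | zero => simp [Matrix.mulVec, dotProduct, Matrix.one_apply]
  | succ n ih =>
    rw [pow_succ', ← Matrix.mulVec_mulVec]
    unfold Matrix.mulVec dotProduct
    calc ∑ k, Q j k * (Q ^ n).mulVec (fun _ => 1) k
        ≤ ∑ k, Q j k * 1 :=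
          Finset.sum_le_sum fun k _ => mul_le_mul_of_nonneg_left (ih k) (hQnn j k)
      _ ≤ 1 := by simpa using hQrow j

lemma mulVec_mono {x y : Fin m → ℝ} (h : ∀ k, x k ≤ y k) (j : Fin m) :
    Q.mulVec x j ≤ Q.mulVec y j := by
  simp only [Matrix.mulVec, dotProduct]
  exact Finset.sum_le_sum fun k _ => mul_le_mul_of_nonneg_left (h k) (hQnn j k)

lemma u_succ_le (hQrow : ∀ i, ∑ j, Q i j ≤ 1) (n : ℕ) (j : Fin m) :
    (Q ^ (n + 1)).mulVec (fun _ => 1) j ≤ (Q ^ n).mulVec (fun _ => 1) j := by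
  induction n generalizing j with
  | zero =>
    rw [pow_one, pow_zero]
    simp only [Matrix.mulVec, dotProduct, Matrix.one_apply]
    simpa using hQrow j
  | succ n ih =>
    have e : ∀ k : ℕ, (Q ^ (k + 1)).mulVec (fun _ => 1) = Q.mulVec ((Q ^ k).mulVec (fun _ => 1)) := by
      intro k
      rw [show k + 1 = 1 + k by ring, pow_add, pow_one, ← Matrix.mulVec_mulVec]
    rw [e (n + 1), e n]
    refine mulVec_mono Q hQnn (fun k => ?_) j
    have := ih k
    rw [e n] at this
    exact this

lemma u_antitone (hQrow : ∀ i, ∑ j, Q i j ≤ 1) (k n : ℕ) (j : Fin m) :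
    (Q ^ (k + n)).mulVec (fun _ => 1) j ≤ (Q ^ n).mulVec (fun _ => 1) j := by
  induction k with
  | zero => simp
  | succ k ih =>
    calc (Q ^ (k + 1 + n)).mulVec (fun _ => 1) j
        = (Q ^ (k + n + 1)).mulVec (fun _ => 1) j := by ring_nf
      _ ≤ (Q ^ (k + n)).mulVec (fun _ => 1) j := u_succ_le Q hQnn hQrow (k + n) j
      _ ≤ _ := ih

lemma path_le_u (n : ℕ) (f : ℕ → Fin m) :
    ∏ i ∈ Finset.range n, Q (f i) (f (i + 1)) ≤ (Q ^ n).mulVec (fun _ => 1) (f 0) := by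
  induction n generalizing f with
  | zero => simp [Matrix.mulVec, dotProduct, Matrix.one_apply]
  | succ n ih =>
    have h1 : ∏ i ∈ Finset.range (n + 1), Q (f i) (f (i + 1))
        = Q (f 0) (f 1) * ∏ i ∈ Finset.range n, Q (f (i + 1)) (f (i + 1 + 1)) := by
      rw [Finset.prod_range_succ' (fun i => Q (f i) (f (i + 1))) n, mul_comm]
    have h2 := ih (fun i => f (i + 1))
    calc ∏ i ∈ Finset.range (n + 1), Q (f i) (f (i + 1))
        = Q (f 0) (f 1) * ∏ i ∈ Finset.range n, Q (f (i + 1)) (f (i + 1 + 1)) := h1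
      _ ≤ Q (f 0) (f 1) * (Q ^ n).mulVec (fun _ => 1) (f 1) :=
          mul_le_mul_of_nonneg_left h2 (hQnn _ _)
      _ ≤ ∑ k, Q (f 0) k * (Q ^ n).mulVec (fun _ => 1) k :=
          Finset.single_le_sum (f := fun k => Q (f 0) k * (Q ^ n).mulVec (fun _ => 1) k)
            (fun k _ => mul_nonneg (hQnn _ _) (u_nonneg Q hQnn n k)) (Finset.mem_univ (f 1))
      _ = (Q ^ (n + 1)).mulVec (fun _ => 1) (f 0) := by
          rw [show n + 1 = 1 + n by ring, pow_add, pow_one, ← Matrix.mulVec_mulVec]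
          rfl

lemma exists_pos_path (n : ℕ) (j : Fin m) (h : 0 < (Q ^ n).mulVec (fun _ => 1) j) :
    ∃ f : ℕ → Fin m, f 0 = j ∧ ∀ i < n, 0 < Q (f i) (f (i + 1)) := by
  induction n generalizing j with
  | zero => exact ⟨fun _ => j, rfl, by omega⟩
  | succ n ih =>
    rw [show n + 1 = 1 + n by ring, pow_add, pow_one, ← Matrix.mulVec_mulVec] at h
    have : ∃ k, 0 < Q j k * (Q ^ n).mulVec (fun _ => 1) k := by
      by_contra hc
      push_neg at hc
      have : (Q *ᵥ ((Q ^ n) *ᵥ fun _ => 1)) j ≤ 0 := by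
        unfold Matrix.mulVec dotProduct
        exact Finset.sum_nonpos fun k _ => hc k
      linarith
    obtain ⟨k, hk⟩ := this
    have hQjk : 0 < Q j k := by
      rcases lt_or_ge 0 (Q j k) with h | h
      · exact h
      · nlinarith [u_nonneg Q hQnn n k]
    have huk : 0 < (Q ^ n).mulVec (fun _ => 1) k := by
      nlinarith [hQnn j k]
    obtain ⟨g, hg0, hg⟩ := ih k huk
    refine ⟨fun i => if i = 0 then j else g (i - 1), by simp, ?_⟩
    intro i hi
    rcases Nat.eq_zero_or_pos i with h0 | h0
    · subst h0; simpa [hg0] using hQjk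
    · have h1 : i ≠ 0 := by omega
      have h2 : i + 1 ≠ 0 := by omega
      simp only [h1, h2, if_false]
      have : i - 1 + 1 = i + 1 - 1 := by omega
      rw [show i + 1 - 1 = (i - 1) + 1 by omega]
      exact hg (i - 1) (by omega)

end aux

/-- Regular geometric tail for the absorption time of a finite-state Markov
chain.  Let `Q` be a substochastic `m × m` matrix (nonnegative entries, row
sums at most 1), `ν` a probability vector, and `t n = νᵀ Qⁿ 𝟙`.  If `t n > 0`
for every `n` and `t n → 0`, then there is a rate `ρ ∈ (0, ∞)` with
`(1/n) log t n → −ρ`. -/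
theorem substochastic_tail_rate
    (m : ℕ) (Q : Matrix (Fin m) (Fin m) ℝ)
    (hQnn : ∀ i j, 0 ≤ Q i j)
    (hQrow : ∀ i, ∑ j, Q i j ≤ 1)
    (ν : Fin m → ℝ)
    (hνnn : ∀ i, 0 ≤ ν i) (hνsum : ∑ i, ν i = 1)
    (t : ℕ → ℝ)
    (ht : ∀ n, t n = ν ⬝ᵥ (Q ^ n).mulVec (fun _ => 1))
    (htpos : ∀ n, 0 < t n)
    (htlim : Tendsto t atTop (nhds 0)) :
    ∃ ρ : ℝ, 0 < ρ ∧
      Tendsto (fun n : ℕ => Real.log (t n) / n) atTop (nhds (-ρ)) := by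
  classical
  have hm : 0 < m := by
    by_contra h
    push_neg at h
    interval_cases m
    simp at hνsum
  set u : ℕ → Fin m → ℝ := fun n j => (Q ^ n).mulVec (fun _ => 1) j with hu
  set w : ℕ → Fin m → ℝ := fun a j => (ν ᵥ* (Q ^ a)) j with hw
  have hunn : ∀ n j, 0 ≤ u n j := fun n j => u_nonneg Q hQnn n j
  have hwnn : ∀ a j, 0 ≤ w a j := by
    intro a j
    simp only [hw, Matrix.vecMul, dotProduct]
    exact Finset.sum_nonneg fun i _ => mul_nonneg (hνnn i) (pow_entry_nonneg Q hQnn a i j)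
  have htsum : ∀ n, t n = ∑ i, ν i * u n i := fun n => ht n
  have htw : ∀ a n, t (a + n) = ∑ j, w a j * u n j := by
    intro a n
    rw [ht, pow_add, ← Matrix.mulVec_mulVec, dotProduct_mulVec]
    rfl
  have hu0 : ∀ j, u 0 j = 1 := by
    intro j
    simp only [hu, pow_zero, Matrix.one_mulVec]
  have hwsum : ∀ a, ∑ j, w a j = t a := by
    intro a
    have h := htw a 0
    rw [Nat.add_zero] at h
    rw [h]
    exact Finset.sum_congr rfl fun j _ => by rw [hu0 j, mul_one]
  have hmono : ∀ k n, t (k + n) ≤ t n := by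
    intro k n
    rw [ht, ht]
    refine Finset.sum_le_sum fun i _ => ?_
    exact mul_le_mul_of_nonneg_left (u_antitone Q hQnn hQrow k n i) (hνnn i)
  set S : Finset (Fin m) := Finset.univ.filter (fun j => ∃ a, 0 < w a j) with hS
  have hSne : S.Nonempty := by
    have : ∃ i, 0 < ν i := by
      by_contra h
      push_neg at h
      have : (∑ i, ν i) ≤ 0 := Finset.sum_nonpos fun i _ => h i
      rw [hνsum] at this; linarith
    obtain ⟨i, hi⟩ := this
    refine ⟨i, Finset.mem_filter.mpr ⟨Finset.mem_univ _, ⟨0, ?_⟩⟩⟩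
    simp only [hw, pow_zero, Matrix.vecMul_one]
    exact hi
  have hch : ∀ j : Fin m, ∃ a : ℕ, j ∈ S → 0 < w a j := by
    intro j
    by_cases hj : j ∈ S
    · obtain ⟨a, ha⟩ := (Finset.mem_filter.mp hj).2
      exact ⟨a, fun _ => ha⟩
    · exact ⟨0, fun h => absurd h hj⟩
  choose A hA using hch
  set c : ℝ := S.inf' hSne (fun j => w (A j) j) with hc
  have hcpos : 0 < c := by
    rw [hc, Finset.lt_inf'_iff]
    exact fun j hj => hA j hj
  have hkey : ∀ j ∈ S, ∀ n, c * u n j ≤ t n := by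
    intro j hj n
    have h1 : c ≤ w (A j) j := Finset.inf'_le _ hj
    have h2 : w (A j) j * u n j ≤ ∑ k, w (A j) k * u n k :=
      Finset.single_le_sum (f := fun k => w (A j) k * u n k)
        (fun k _ => mul_nonneg (hwnn _ k) (hunn n k)) (Finset.mem_univ j)
    have h3 : (∑ k, w (A j) k * u n k) = t (A j + n) := (htw (A j) n).symm
    have h4 := hmono (A j) n
    have h5 : c * u n j ≤ w (A j) j * u n j :=
      mul_le_mul_of_nonneg_right h1 (hunn n j)
    linarith
  have hzero : ∀ j ∉ S, ∀ a, w a j = 0 := by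
    intro j hj a
    have : ¬ ∃ a, 0 < w a j := fun h => hj (Finset.mem_filter.mpr ⟨Finset.mem_univ _, h⟩)
    push_neg at this
    exact le_antisymm (this a) (hwnn a j)
  have hsubmul : ∀ a b, t (a + b) ≤ t a * (t b / c) := by
    intro a b
    rw [htw a b]
    calc ∑ j, w a j * u b j ≤ ∑ j, w a j * (t b / c) := by
          refine Finset.sum_le_sum fun j _ => ?_
          by_cases hj : j ∈ S
          · have huc : u b j ≤ t b / c := by
              rw [le_div_iff₀ hcpos]
              have := hkey j hj b
              nlinarith
            exact mul_le_mul_of_nonneg_left huc (hwnn a j)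
          · rw [hzero j hj a]; simp
      _ = (∑ j, w a j) * (t b / c) := by rw [← Finset.sum_mul]
      _ = t a * (t b / c) := by rw [hwsum a]
  -- geometric lower bound via a pumped cycle
  obtain ⟨ε, β, hε, hβ0, hβ1, hlow⟩ :
      ∃ ε β : ℝ, 0 < ε ∧ 0 < β ∧ β ≤ 1 ∧ ∀ n, ε * β ^ n ≤ t n := by
    have hiex : ∃ i, 0 < ν i ∧ 0 < u m i := by
      by_contra hcon
      push_neg at hcon
      have hle : t m ≤ 0 := by
        rw [htsum m]
        refine Finset.sum_nonpos fun i _ => ?_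
        rcases (hνnn i).lt_or_eq with h | h
        · have := hcon i h
          nlinarith
        · rw [← h, zero_mul]
      linarith [htpos m]
    obtain ⟨i, hνi, hui⟩ := hiex
    obtain ⟨f, hf0, hf⟩ := exists_pos_path Q hQnn m i hui
    obtain ⟨x, y, hxy, hfxy⟩ :=
      Fintype.exists_ne_map_eq_of_card_lt (fun x : Fin (m + 1) => f x)
        (by simp)
    have hxyv : (x : ℕ) ≠ (y : ℕ) := fun h => hxy (Fin.ext h)
    obtain ⟨a, b, hab, hbm, hfab⟩ : ∃ a b : ℕ, a < b ∧ b ≤ m ∧ f a = f b := by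
      rcases lt_or_gt_of_ne hxyv with h | h
      · exact ⟨x, y, h, Nat.lt_succ_iff.mp y.isLt, hfxy⟩
      · exact ⟨y, x, h, Nat.lt_succ_iff.mp x.isLt, hfxy.symm⟩
    set ℓ : ℕ := b - a with hℓ
    have hlpos : 0 < ℓ := by omega
    set g' : ℕ → Fin m := fun i => if i < a then f i else f (a + (i - a) % ℓ) with hg'
    have hstep : ∀ i : ℕ, ∃ j, j < m ∧ g' i = f j ∧ g' (i + 1) = f (j + 1) := by
      intro i
      by_cases hia : i < a
      · refine ⟨i, by omega, if_pos hia, ?_⟩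
        by_cases hia1 : i + 1 < a
        · exact if_pos hia1
        · have hi1a : i + 1 = a := by omega
          rw [hg']
          simp only [hi1a, lt_irrefl, if_false, Nat.sub_self, Nat.zero_mod, Nat.add_zero]
      · push_neg at hia
        have hrl : (i - a) % ℓ < ℓ := Nat.mod_lt _ hlpos
        have hgi : g' i = f (a + (i - a) % ℓ) := if_neg (by omega)
        have hnext : (i + 1 - a) % ℓ = ((i - a) % ℓ + 1) % ℓ := by
          rw [show i + 1 - a = (i - a) + 1 by omega]
          exact (Nat.mod_add_mod (i - a) ℓ 1).symm
        have hgi1 : g' (i + 1) = f (a + ((i - a) % ℓ + 1) % ℓ) := by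
          rw [hg']
          simp only [if_neg (show ¬ (i + 1 < a) by omega)]
          rw [hnext]
        by_cases hrs : (i - a) % ℓ + 1 < ℓ
        · refine ⟨a + (i - a) % ℓ, by omega, hgi, ?_⟩
          rw [hgi1, Nat.mod_eq_of_lt hrs, ← Nat.add_assoc]
        · have hre : (i - a) % ℓ + 1 = ℓ := by omega
          refine ⟨a + (i - a) % ℓ, by omega, hgi, ?_⟩
          rw [hgi1, hre, Nat.mod_self, Nat.add_zero,
            show a + (i - a) % ℓ + 1 = b by omega]
          exact hfab
    have hg0 : g' 0 = f 0 := by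
      rw [hg']
      by_cases h : 0 < a
      · simp only [h, if_true]
      · have ha0 : a = 0 := by omega
        simp [ha0]
    have hrne : (Finset.range m).Nonempty := ⟨0, Finset.mem_range.mpr hm⟩
    set β : ℝ := min 1 ((Finset.range m).inf' hrne (fun k => Q (f k) (f (k + 1)))) with hβ
    have hβ0 : 0 < β := by
      refine lt_min one_pos ?_
      rw [Finset.lt_inf'_iff]
      exact fun k hk => hf k (Finset.mem_range.mp hk)
    have hβ1 : β ≤ 1 := min_le_left _ _
    have hedge : ∀ k : ℕ, β ≤ Q (g' k) (g' (k + 1)) := by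
      intro k
      obtain ⟨j, hj, h1, h2⟩ := hstep k
      rw [h1, h2]
      exact le_trans (min_le_right _ _) (Finset.inf'_le _ (Finset.mem_range.mpr hj))
    refine ⟨ν i, β, hνi, hβ0, hβ1, fun n => ?_⟩
    have hp : β ^ n ≤ ∏ k ∈ Finset.range n, Q (g' k) (g' (k + 1)) := by
      calc β ^ n = ∏ _k ∈ Finset.range n, β := by
            rw [Finset.prod_const, Finset.card_range]
        _ ≤ _ := Finset.prod_le_prod (fun _ _ => le_of_lt hβ0) (fun k _ => hedge k)
    have hpu := path_le_u Q hQnn n g'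
    rw [hg0, hf0] at hpu
    have hsingle : ν i * u n i ≤ t n := by
      rw [htsum n]
      exact Finset.single_le_sum (f := fun k => ν k * u n k)
        (fun k _ => mul_nonneg (hνnn k) (hunn n k)) (Finset.mem_univ i)
    calc ν i * β ^ n ≤ ν i * u n i := by
          refine mul_le_mul_of_nonneg_left (le_trans hp ?_) (hνnn i)
          exact hpu
      _ ≤ t n := hsingle
  -- Fekete's lemma
  set g : ℕ → ℝ := fun n => Real.log (t n / c) with hg
  have hgpos : ∀ n, 0 < t n / c := fun n => div_pos (htpos n) hcpos
  have hsub : Subadditive g := by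
    intro a b
    have h1 : t (a + b) / c ≤ (t a / c) * (t b / c) := by
      have h2 : t (a + b) / c ≤ (t a * (t b / c)) / c :=
        div_le_div_of_nonneg_right (hsubmul a b) (le_of_lt hcpos)
      calc t (a + b) / c ≤ (t a * (t b / c)) / c := h2
        _ = (t a / c) * (t b / c) := by ring
    calc g (a + b) ≤ Real.log ((t a / c) * (t b / c)) :=
          Real.log_le_log (hgpos _) h1
      _ = g a + g b :=
          Real.log_mul (ne_of_gt (hgpos a)) (ne_of_gt (hgpos b))
  have hlogb : Real.log β ≤ 0 := Real.log_nonpos (le_of_lt hβ0) hβ1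
  set B : ℝ := min 0 (Real.log (ε / c)) + Real.log β with hB
  have hB0 : B ≤ 0 := add_nonpos (min_le_left _ _) hlogb
  have hbdd : BddBelow (Set.range fun n : ℕ => g n / n) := by
    refine ⟨B, ?_⟩
    rintro x ⟨n, rfl⟩
    rcases Nat.eq_zero_or_pos n with h0 | h0
    · subst h0
      simpa using hB0
    · have hn1 : (1 : ℝ) ≤ (n : ℝ) := by exact_mod_cast h0
      have hnpos : (0 : ℝ) < (n : ℝ) := by linarith
      have hgeo : ε / c * β ^ n ≤ t n / c := by
        rw [div_mul_eq_mul_div]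
        exact div_le_div_of_nonneg_right (hlow n) (le_of_lt hcpos)
      have h1 : Real.log (ε / c) + (n : ℝ) * Real.log β ≤ g n := by
        have hlog := Real.log_le_log (by positivity) hgeo
        rw [Real.log_mul (ne_of_gt (by positivity)) (ne_of_gt (pow_pos hβ0 n)),
          Real.log_pow] at hlog
        exact hlog
      rw [le_div_iff₀ hnpos]
      have hmin1 : min 0 (Real.log (ε / c)) * (n : ℝ) ≤ Real.log (ε / c) := by
        rcases le_total 0 (Real.log (ε / c)) with h | h
        · rw [min_eq_left h]
          rw [zero_mul]; exact h
        · rw [min_eq_right h]; nlinarith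
      have hBn : B * (n : ℝ) = min 0 (Real.log (ε / c)) * (n : ℝ) + Real.log β * (n : ℝ) := by
        rw [hB]; ring
      calc B * (n : ℝ)
          = min 0 (Real.log (ε / c)) * (n : ℝ) + Real.log β * (n : ℝ) := hBn
        _ ≤ Real.log (ε / c) + (n : ℝ) * Real.log β :=
            add_le_add hmin1 (le_of_eq (mul_comm _ _))
        _ ≤ g n := h1
  have htendg := hsub.tendsto_lim hbdd
  refine ⟨-hsub.lim, ?_, ?_⟩
  · rw [neg_pos]
    obtain ⟨N, hN1, hNlt⟩ : ∃ N, 1 ≤ N ∧ t N < c := by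
      have h1 : ∀ᶠ n in atTop, t n < c := htlim.eventually (gt_mem_nhds hcpos)
      obtain ⟨N, hN⟩ := (h1.and (eventually_ge_atTop 1)).exists
      exact ⟨N, hN.2, hN.1⟩
    have hgN : g N < 0 := Real.log_neg (hgpos N) ((div_lt_one hcpos).mpr hNlt)
    have hle := hsub.lim_le_div hbdd (show N ≠ 0 by omega)
    have hNpos : (0 : ℝ) < (N : ℝ) := by exact_mod_cast hN1
    have : g N / (N : ℝ) < 0 := div_neg_of_neg_of_pos hgN hNpos
    linarith
  · rw [neg_neg]
    have hlogc : Tendsto (fun n : ℕ => Real.log c / (n : ℝ)) atTop (nhds 0) :=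
      tendsto_const_div_atTop_nhds_zero_nat _
    have hadd := htendg.add hlogc
    rw [add_zero] at hadd
    have heq : ∀ n : ℕ, g n / (n : ℝ) + Real.log c / (n : ℝ) = Real.log (t n) / (n : ℝ) := by
      intro n
      rw [← add_div]
      congr 1
      show Real.log (t n / c) + Real.log c = Real.log (t n)
      rw [Real.log_div (ne_of_gt (htpos n)) (ne_of_gt hcpos)]
      ring
    exact Tendsto.congr heq hadd
end
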